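/- arXiv:2308.08694 — 4 statements merged into one kernel-verified Lean document; each statement's English description precedes it below -/
import Mathlib

section
/- Let $n, d$ be positive integers with $n \ge 2d$, and let $\lambda \vdash n$ be a partition with first part $\lambda_1 = n - d$. Let $\tilde{\lambda} \vdash d$ be the partition obtained from $\lambda$ by deleting its first row. Then the number of standard Young tableaux of shape $\lambda$ is at least $\binom{n-d}{d}$ times the number of standard Young tableaux of shape $\tilde{\lambda}$. -/
def IsPartitionList (L : List ℕ) (n : ℕ) : Prop :=
  L.Pairwise (· ≥ ·) ∧ (∀ x ∈ L, 0 < x) ∧ L.sum = n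

/-- `T` is a standard Young tableau of shape `L`: it fills the cells of the Young
diagram of `L` bijectively with `1, …, L.sum`, is `0` off the diagram, and is
strictly increasing along rows and columns. -/
def IsSYT (L : List ℕ) (T : ℕ × ℕ → ℕ) : Prop :=
  (∀ p : ℕ × ℕ, ¬ p.2 < L.getD p.1 0 → T p = 0) ∧
  Set.BijOn T {p : ℕ × ℕ | p.2 < L.getD p.1 0} (Set.Icc 1 L.sum) ∧
  (∀ i j j' : ℕ, j < j' → j' < L.getD i 0 → T (i, j) < T (i, j')) ∧
  (∀ i i' j : ℕ, i < i' → j < L.getD i' 0 → T (i, j) < T (i', j))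

/-- The number of standard Young tableaux of shape `L`. -/
noncomputable def sytCount (L : List ℕ) : ℕ :=
  Nat.card {T : ℕ × ℕ → ℕ // IsSYT L T}

namespace SYTAux

lemma sorted_get_le {c : List ℕ} (hc : c.Pairwise (· < ·)) {i j : ℕ} (hij : i ≤ j)
    (hj : j < c.length) : c.get ⟨i, lt_of_le_of_lt hij hj⟩ ≤ c.get ⟨j, hj⟩ := by
  rcases Nat.eq_or_lt_of_le hij with h | h
  · cases h; rfl
  · exact le_of_lt (List.Pairwise.rel_get_of_lt hc h)

lemma sorted_get_lt {c : List ℕ} (hc : c.Pairwise (· < ·)) {i j : ℕ} (hij : i < j)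
    (hj : j < c.length) : c.get ⟨i, lt_trans hij hj⟩ < c.get ⟨j, hj⟩ :=
  List.Pairwise.rel_get_of_lt hc hij

/-- if at least j+1 elements of a strictly sorted list are < m, then element j is < m -/
lemma get_lt_of_filter {c : List ℕ} (hc : c.Pairwise (· < ·)) {j m : ℕ}
    (hj : j < c.length)
    (hcount : j + 1 ≤ (c.filter (fun x => decide (x < m))).length) :
    c.get ⟨j, hj⟩ < m := by
  by_contra hge
  push_neg at hge
  have hsub : (c.filter (fun x => decide (x < m))) ⊆ c.take j := by
    intro x hx
    rw [List.mem_filter] at hx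
    obtain ⟨hxc, hxm⟩ := hx
    simp only [decide_eq_true_eq] at hxm
    obtain ⟨i, hi, hieq⟩ := List.getElem_of_mem hxc
    have hij : i < j := by
      by_contra hij
      push_neg at hij
      have h1 := sorted_get_le hc hij hi
      have h2 : c.get ⟨i, hi⟩ = x := by simp [List.get_eq_getElem, hieq]
      omega
    refine List.mem_take_iff_getElem.2 ⟨i, by simp [lt_min_iff]; omega, hieq⟩
  have hnd : (c.filter (fun x => decide (x < m))).Nodup := hc.nodup.filter _
  have hlen : (c.filter (fun x => decide (x < m))).length ≤ (c.take j).length := by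
    classical
    calc (c.filter (fun x => decide (x < m))).length
        = (c.filter (fun x => decide (x < m))).toFinset.card :=
          (List.toFinset_card_of_nodup hnd).symm
      _ ≤ (c.take j).toFinset.card := Finset.card_le_card (fun x hx => by
          rw [List.mem_toFinset] at *; exact hsub hx)
      _ ≤ (c.take j).length := (c.take j).toFinset_card_le
  rw [List.length_take] at hlen
  omega

/-- two nodup lists with the same members have the same length -/
lemma length_eq_of_mem_iff {l l' : List ℕ} (hl : l.Nodup) (hl' : l'.Nodup)
    (h : ∀ x, x ∈ l ↔ x ∈ l') : l.length = l'.length := by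
  classical
  have : l.toFinset = l'.toFinset := by
    ext x; simp only [List.mem_toFinset]; exact h x
  rw [← List.toFinset_card_of_nodup hl, ← List.toFinset_card_of_nodup hl', this]


def vList (w : List ℕ) : List ℕ := List.ofFn (fun i : Fin w.length => w.get i + i + 1)

lemma vList_length (w : List ℕ) : (vList w).length = w.length := by
  simp [vList]

lemma vList_get (w : List ℕ) {i : ℕ} (h : i < (vList w).length) :
    (vList w).get ⟨i, h⟩ = w.get ⟨i, by simpa [vList_length] using h⟩ + i + 1 := by
  simp [vList, List.get_eq_getElem, List.getElem_ofFn]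

lemma vList_sorted {w : List ℕ} (hw : w.Pairwise (· ≤ ·)) : (vList w).Pairwise (· < ·) := by
  rw [List.pairwise_iff_get]
  intro i j hij
  rcases i with ⟨i, hi⟩; rcases j with ⟨j, hj⟩
  rw [vList_get, vList_get]
  have hij' : i < j := hij
  have := List.pairwise_iff_get.1 hw ⟨i, by simpa [vList_length] using hi⟩
    ⟨j, by simpa [vList_length] using hj⟩ hij'
  omega

lemma mem_vList {w : List ℕ} {x : ℕ} :
    x ∈ vList w ↔ ∃ i : Fin w.length, w.get i + i + 1 = x := by
  simp [vList, List.mem_ofFn]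

/-- in a strictly sorted list of positive naturals, the i-th entry is at least i+1 -/
lemma get_ge_of_sorted {w : List ℕ} (hw : w.Pairwise (· < ·)) (hpos : ∀ x ∈ w, 1 ≤ x) :
    ∀ i (h : i < w.length), i + 1 ≤ w.get ⟨i, h⟩ := by
  intro i
  induction i with
  | zero => intro h; exact hpos _ (w.get_mem ⟨0, h⟩)
  | succ i ih =>
    intro h
    have h' : i < w.length := by omega
    have := sorted_get_lt hw (Nat.lt_succ_self i) h
    have := ih h'
    simp only [Nat.succ_eq_add_one] at *
    omega

def cList (n : ℕ) (v : List ℕ) : List ℕ :=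
  (List.range' 1 n).filter (fun x => decide (x ∉ v))

lemma mem_cList {n : ℕ} {v : List ℕ} {x : ℕ} :
    x ∈ cList n v ↔ (1 ≤ x ∧ x ≤ n) ∧ x ∉ v := by
  rw [cList, List.mem_filter, List.mem_range'_1, decide_eq_true_eq]
  constructor
  · rintro ⟨⟨h1, h2⟩, h3⟩; exact ⟨⟨h1, by omega⟩, h3⟩
  · rintro ⟨⟨h1, h2⟩, h3⟩; exact ⟨⟨h1, by omega⟩, h3⟩

lemma cList_sorted (n : ℕ) (v : List ℕ) : (cList n v).Pairwise (· < ·) := by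
  apply List.Pairwise.filter
  exact List.pairwise_lt_range' (s := 1) (n := n)

lemma cList_nodup (n : ℕ) (v : List ℕ) : (cList n v).Nodup :=
  (cList_sorted n v).nodup

lemma length_filter_not (v l : List ℕ) :
    (l.filter (fun x => decide (x ∉ v))).length + (l.filter (fun x => decide (x ∈ v))).length
      = l.length := by
  induction l with
  | nil => simp
  | cons a l ih =>
    by_cases h : a ∈ v <;> simp [List.filter_cons, h] at ih ⊢ <;> omega

lemma cList_length {n : ℕ} {v : List ℕ} (hv : v.Nodup)
    (hmem : ∀ x ∈ v, 1 ≤ x ∧ x ≤ n) : (cList n v).length = n - v.length := by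
  have h1 := length_filter_not v (List.range' 1 n)
  have h2 : ((List.range' 1 n).filter (fun x => decide (x ∈ v))).length = v.length := by
    apply length_eq_of_mem_iff ((List.nodup_range' (s := 1) (n := n)).filter _) hv
    intro x
    simp [List.mem_filter, List.mem_range'_1]
    intro hx
    have := hmem x hx
    omega
  have h3 : (List.range' 1 n).length = n := by simp
  unfold cList
  omega


lemma cList_get_lt {n : ℕ} {v : List ℕ} (hv : v.Pairwise (· < ·))
    (hmem : ∀ x ∈ v, 1 ≤ x ∧ x ≤ n) {j : ℕ} (hjv : j < v.length)
    (hgrow : 2 * (j + 1) ≤ v.get ⟨j, hjv⟩)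
    (hjc : j < (cList n v).length) :
    (cList n v).get ⟨j, hjc⟩ < v.get ⟨j, hjv⟩ := by
  set m := v.get ⟨j, hjv⟩ with hm
  have hmn : 1 ≤ m ∧ m ≤ n := hmem _ (v.get_mem ⟨j, hjv⟩)
  apply get_lt_of_filter (cList_sorted n v) hjc
  -- Step A
  have hA : ((cList n v).filter (fun x => decide (x < m))).length
      = ((List.range' 1 (m-1)).filter (fun x => decide (x ∉ v))).length := by
    apply length_eq_of_mem_iff ((cList_nodup n v).filter _)
      ((List.nodup_range' (s := 1) (n := m-1)).filter _)
    intro x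
    simp only [List.mem_filter, decide_eq_true_eq, mem_cList, List.mem_range'_1]
    constructor
    · rintro ⟨⟨⟨h1, h2⟩, h3⟩, h4⟩; exact ⟨⟨h1, by omega⟩, h3⟩
    · rintro ⟨⟨h1, h2⟩, h3⟩; exact ⟨⟨⟨h1, by omega⟩, h3⟩, by omega⟩
  -- Step B
  have hB : ((List.range' 1 (m-1)).filter (fun x => decide (x ∈ v))).length = j := by
    have htk : (v.take j).length = j := by rw [List.length_take]; omega
    rw [length_eq_of_mem_iff ((List.nodup_range' (s := 1) (n := m-1)).filter _)
      ((List.take_sublist j v).nodup hv.nodup) ?_, htk]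
    intro x
    simp only [List.mem_filter, decide_eq_true_eq, List.mem_range'_1,
      List.mem_take_iff_getElem]
    constructor
    · rintro ⟨⟨h1, h2⟩, h3⟩
      obtain ⟨i, hi, hieq⟩ := List.getElem_of_mem h3
      have hij : i < j := by
        by_contra hc
        push_neg at hc
        have := sorted_get_le hv hc hi
        simp only [List.get_eq_getElem] at this hm
        omega
      exact ⟨i, by simp [List.length_take, lt_min_iff]; omega, hieq⟩
    · rintro ⟨i, hi, hieq⟩
      have hi1 : i < j := by simp [lt_min_iff] at hi; omega
      have hi2 : i < v.length := by simp [lt_min_iff] at hi; omega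
      have hlt := sorted_get_lt hv hi1 hjv
      simp only [List.get_eq_getElem] at hlt hm
      have hx : x ∈ v := hieq ▸ List.getElem_mem hi2
      have := hmem x hx
      exact ⟨⟨this.1, by omega⟩, hx⟩
  have hC := length_filter_not v (List.range' 1 (m-1))
  have hlen : (List.range' 1 (m-1)).length = m - 1 := by simp
  omega


-- getD bridge lemmas
lemma getD_mem {l : List ℕ} {i : ℕ} (h : i < l.length) : l.getD i 0 ∈ l := by
  rw [List.getD_eq_getElem _ _ h]; exact List.getElem_mem h

lemma mem_iff_getD {l : List ℕ} {x : ℕ} :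
    x ∈ l ↔ ∃ i, i < l.length ∧ l.getD i 0 = x := by
  constructor
  · intro hx
    obtain ⟨i, hi, hieq⟩ := List.getElem_of_mem hx
    exact ⟨i, hi, by rw [List.getD_eq_getElem _ _ hi]; exact hieq⟩
  · rintro ⟨i, hi, rfl⟩; exact getD_mem hi

lemma sorted_getD_le {c : List ℕ} (hc : c.Pairwise (· < ·)) {i j : ℕ} (hij : i ≤ j)
    (hj : j < c.length) : c.getD i 0 ≤ c.getD j 0 := by
  rw [List.getD_eq_getElem _ _ (lt_of_le_of_lt hij hj), List.getD_eq_getElem _ _ hj]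
  exact sorted_get_le hc hij hj

lemma sorted_getD_lt {c : List ℕ} (hc : c.Pairwise (· < ·)) {i j : ℕ} (hij : i < j)
    (hj : j < c.length) : c.getD i 0 < c.getD j 0 := by
  rw [List.getD_eq_getElem _ _ (lt_trans hij hj), List.getD_eq_getElem _ _ hj]
  exact sorted_get_lt hc hij hj

lemma nodup_getD_inj {c : List ℕ} (h : c.Nodup) {i j : ℕ} (hi : i < c.length)
    (hj : j < c.length) (heq : c.getD i 0 = c.getD j 0) : i = j := by
  rw [List.getD_eq_getElem _ _ hi, List.getD_eq_getElem _ _ hj] at heq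
  exact (h.getElem_inj_iff).1 heq

lemma vList_getD {w : List ℕ} {i : ℕ} (h : i < w.length) :
    (vList w).getD i 0 = w.getD i 0 + i + 1 := by
  have h' : i < (vList w).length := by rw [vList_length]; exact h
  rw [List.getD_eq_getElem _ _ h', List.getD_eq_getElem _ _ h]
  have := vList_get w h'
  simp only [List.get_eq_getElem] at this
  exact this

lemma getD_ge_of_sorted {w : List ℕ} (hw : w.Pairwise (· < ·)) (hpos : ∀ x ∈ w, 1 ≤ x)
    {i : ℕ} (h : i < w.length) : i + 1 ≤ w.getD i 0 := by
  rw [List.getD_eq_getElem _ _ h]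
  have := get_ge_of_sorted hw hpos i h
  simpa [List.get_eq_getElem] using this

lemma cList_getD_lt {n : ℕ} {v : List ℕ} (hv : v.Pairwise (· < ·))
    (hmem : ∀ x ∈ v, 1 ≤ x ∧ x ≤ n) {j : ℕ} (hjv : j < v.length)
    (hgrow : 2 * (j + 1) ≤ v.getD j 0)
    (hjc : j < (cList n v).length) :
    (cList n v).getD j 0 < v.getD j 0 := by
  rw [List.getD_eq_getElem _ _ hjc, List.getD_eq_getElem _ _ hjv]
  apply cList_get_lt hv hmem hjv _ hjc
  rw [List.getD_eq_getElem _ _ hjv] at hgrow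
  exact hgrow

lemma getD_le_sum (t : List ℕ) (i : ℕ) : t.getD i 0 ≤ t.sum := by
  by_cases h : i < t.length
  · rw [List.getD_eq_getElem _ _ h]
    exact List.single_le_sum (fun x _ => Nat.zero_le x) _ (List.getElem_mem h)
  · rw [List.getD_eq_default _ _ (by omega)]
    exact Nat.zero_le _

lemma getD_antitone {t : List ℕ} (ht : t.Pairwise (· ≥ ·)) {i i' : ℕ} (h : i ≤ i') :
    t.getD i' 0 ≤ t.getD i 0 := by
  by_cases h' : i' < t.length
  · have hi : i < t.length := by omega
    rw [List.getD_eq_getElem _ _ h', List.getD_eq_getElem _ _ hi]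
    rcases Nat.eq_or_lt_of_le h with rfl | hlt
    · rfl
    · exact List.pairwise_iff_get.1 ht ⟨i, hi⟩ ⟨i', h'⟩ hlt
  · rw [List.getD_eq_default _ _ (by omega)]
    exact Nat.zero_le _

def buildT (nd : ℕ) (t : List ℕ) (v c : List ℕ) (T : ℕ × ℕ → ℕ) : ℕ × ℕ → ℕ :=
  fun p =>
    if p.1 = 0 then (if p.2 < nd then c.getD p.2 0 else 0)
    else (if p.2 < t.getD (p.1 - 1) 0 then v.getD (T (p.1 - 1, p.2) - 1) 0 else 0)

section Construct

variable {n d : ℕ} {t : List ℕ} {w : List ℕ} {T : ℕ × ℕ → ℕ}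

theorem construct_isSYT (hd : 0 < d) (hnd : 2 * d ≤ n)
    (ht : IsPartitionList t d)
    (hw : w.Pairwise (· < ·)) (hwlen : w.length = d)
    (hwmem : ∀ x ∈ w, 1 ≤ x ∧ x ≤ n - d)
    (hT : IsSYT t T) :
    IsSYT ((n - d) :: t) (buildT (n - d) t (vList w) (cList n (vList w)) T) := by
  obtain ⟨hsort, hpos, hsum⟩ := ht
  obtain ⟨hT0, hTbij, hTrow, hTcol⟩ := hT
  set v := vList w with hv
  set c := cList n v with hc
  have hdnd : d ≤ n - d := by omega
  have hvlen : v.length = d := by rw [hv, vList_length, hwlen]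
  have hvsorted : v.Pairwise (· < ·) := vList_sorted (hw.imp le_of_lt)
  have hvmem : ∀ x ∈ v, 1 ≤ x ∧ x ≤ n := by
    intro x hx
    obtain ⟨⟨i, hi⟩, hieq⟩ := mem_vList.1 hx
    have := hwmem _ (w.get_mem ⟨i, hi⟩)
    have : i < d := hwlen ▸ hi
    omega
  have hvgrow : ∀ j, j < v.length → 2 * (j + 1) ≤ v.getD j 0 := by
    intro j h
    have h' : j < w.length := by omega
    have h1 : v.getD j 0 = w.getD j 0 + j + 1 := vList_getD h'
    have h2 : j + 1 ≤ w.getD j 0 :=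
      getD_ge_of_sorted hw (fun x hx => (hwmem x hx).1) h'
    omega
  have hclen : c.length = n - d := by
    rw [hc, cList_length hvsorted.nodup hvmem, hvlen]
  have hcmemc : ∀ {x}, x ∈ c → ((1 ≤ x ∧ x ≤ n) ∧ x ∉ v) := fun hx => mem_cList.1 (hc ▸ hx)
  have hLsum : ((n - d) :: t).sum = n := by
    rw [List.sum_cons, hsum]; omega
  have hgetD0 : ((n - d) :: t).getD 0 0 = n - d := rfl
  have hgetDS : ∀ i : ℕ, i ≠ 0 → ((n - d) :: t).getD i 0 = t.getD (i - 1) 0 := by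
    intro i hi
    obtain ⟨i', rfl⟩ : ∃ i', i = i' + 1 := ⟨i - 1, by omega⟩
    simp [List.getD_cons_succ]
  have hTmem : ∀ i j, j < t.getD i 0 → 1 ≤ T (i, j) ∧ T (i, j) ≤ d := by
    intro i j hij
    have := hTbij.mapsTo (show (i, j) ∈ {p : ℕ × ℕ | p.2 < t.getD p.1 0} from hij)
    rw [Set.mem_Icc, hsum] at this
    exact this
  have hTge : ∀ i j, j < t.getD i 0 → j + 1 ≤ T (i, j) := by
    have h0 : ∀ j, j < t.getD 0 0 → j + 1 ≤ T (0, j) := by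
      intro j
      induction j with
      | zero => intro h; exact (hTmem 0 0 h).1
      | succ j ih =>
        intro h
        have hj : j < t.getD 0 0 := by omega
        have := hTrow 0 j (j + 1) (Nat.lt_succ_self j) h
        have := ih hj
        omega
    intro i j hij
    rcases Nat.eq_zero_or_pos i with rfl | hi
    · exact h0 j hij
    · have hj0 : j < t.getD 0 0 := lt_of_lt_of_le hij (getD_antitone hsort (Nat.zero_le i))
      have := hTcol 0 i j hi hij
      have := h0 j hj0
      omega
  have hval0 : ∀ j, j < n - d →
      buildT (n - d) t v c T (0, j) = c.getD j 0 := by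
    intro j h
    simp only [buildT]
    rw [if_pos trivial, if_pos h]
  have hvalS : ∀ i j, j < t.getD i 0 →
      buildT (n - d) t v c T (i + 1, j) = v.getD (T (i, j) - 1) 0 := by
    intro i j h
    simp only [buildT]
    rw [if_neg (Nat.succ_ne_zero i), Nat.add_sub_cancel, if_pos h]
  have hvalSmem : ∀ i j, j < t.getD i 0 →
      buildT (n - d) t v c T (i + 1, j) ∈ v := by
    intro i j h
    rw [hvalS i j h]
    have := hTmem i j h
    exact getD_mem (by omega)
  refine ⟨?_, ⟨?_, ?_, ?_⟩, ?_, ?_⟩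
  · -- zero outside
    rintro ⟨i, j⟩ hij
    simp only [Set.mem_setOf_eq] at hij
    rcases Nat.eq_zero_or_pos i with rfl | hi
    · rw [hgetD0] at hij
      simp only [buildT]
      rw [if_pos trivial, if_neg hij]
    · rw [hgetDS i (by omega)] at hij
      simp only [buildT]
      rw [if_neg (by omega : ¬ i = 0), if_neg hij]
  · -- MapsTo
    rintro ⟨i, j⟩ hij
    simp only [Set.mem_setOf_eq] at hij
    rw [Set.mem_Icc, hLsum]
    rcases Nat.eq_zero_or_pos i with rfl | hi
    · rw [hgetD0] at hij
      rw [hval0 j hij]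
      exact (hcmemc (getD_mem (by omega))).1
    · rw [hgetDS i (by omega)] at hij
      obtain ⟨i', rfl⟩ : ∃ i', i = i' + 1 := ⟨i - 1, by omega⟩
      rw [Nat.add_sub_cancel] at hij
      exact hvmem _ (hvalSmem i' j hij)
  · -- InjOn
    rintro ⟨i, j⟩ hij ⟨i', j'⟩ hij' heq
    simp only [Set.mem_setOf_eq] at hij hij'
    rcases Nat.eq_zero_or_pos i with rfl | hi <;> rcases Nat.eq_zero_or_pos i' with rfl | hi'
    · rw [hgetD0] at hij hij'
      rw [hval0 j hij, hval0 j' hij'] at heq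
      have := nodup_getD_inj (cList_nodup n v) (hc ▸ (by omega : j < c.length))
        (hc ▸ (by omega : j' < c.length)) (hc ▸ heq)
      exact Prod.ext rfl this
    · exfalso
      rw [hgetD0] at hij
      rw [hgetDS i' (by omega)] at hij'
      obtain ⟨b, rfl⟩ : ∃ k, i' = k + 1 := ⟨i' - 1, by omega⟩
      rw [Nat.add_sub_cancel] at hij'
      rw [hval0 j hij] at heq
      have h1 : c.getD j 0 ∈ c := getD_mem (by omega)
      have h2 : c.getD j 0 ∈ v := heq ▸ hvalSmem b j' hij'
      exact (hcmemc h1).2 h2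
    · exfalso
      rw [hgetD0] at hij'
      rw [hgetDS i (by omega)] at hij
      obtain ⟨a, rfl⟩ : ∃ k, i = k + 1 := ⟨i - 1, by omega⟩
      rw [Nat.add_sub_cancel] at hij
      rw [hval0 j' hij'] at heq
      have h1 : c.getD j' 0 ∈ c := getD_mem (by omega)
      have h2 : c.getD j' 0 ∈ v := heq ▸ hvalSmem a j hij
      exact (hcmemc h1).2 h2
    · rw [hgetDS i (by omega)] at hij
      rw [hgetDS i' (by omega)] at hij'
      obtain ⟨a, rfl⟩ : ∃ k, i = k + 1 := ⟨i - 1, by omega⟩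
      obtain ⟨b, rfl⟩ : ∃ k, i' = k + 1 := ⟨i' - 1, by omega⟩
      rw [Nat.add_sub_cancel] at hij hij'
      rw [hvalS a j hij, hvalS b j' hij'] at heq
      have h1 := hTmem a j hij
      have h2 := hTmem b j' hij'
      have hidx := nodup_getD_inj hvsorted.nodup
        (by omega : T (a, j) - 1 < v.length) (by omega : T (b, j') - 1 < v.length) heq
      have hTeq : T (a, j) = T (b, j') := by omega
      have hcells := hTbij.injOn (show (a, j) ∈ _ from hij) (show (b, j') ∈ _ from hij') hTeq
      have h3 : a = b := congrArg Prod.fst hcells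
      have h4 : j = j' := congrArg Prod.snd hcells
      exact Prod.ext (by simp [h3]) h4
  · -- SurjOn
    intro x hx
    rw [Set.mem_Icc, hLsum] at hx
    by_cases hxv : x ∈ v
    · obtain ⟨k, hklt, hkeq⟩ := mem_iff_getD.1 hxv
      have hkd : k < d := by omega
      have : (k + 1) ∈ Set.Icc 1 t.sum := by rw [Set.mem_Icc, hsum]; omega
      obtain ⟨⟨a, b⟩, hab, habeq⟩ := hTbij.surjOn this
      simp only [Set.mem_setOf_eq] at hab
      refine ⟨(a + 1, b), ?_, ?_⟩
      · simp only [Set.mem_setOf_eq]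
        rw [hgetDS (a + 1) (by omega), Nat.add_sub_cancel]
        exact hab
      · rw [hvalS a b hab]
        have hT' : T (a, b) = k + 1 := habeq
        rw [hT', Nat.add_sub_cancel, hkeq]
    · have hxc : x ∈ c := hc ▸ mem_cList.2 ⟨hx, hxv⟩
      obtain ⟨k, hklt, hkeq⟩ := mem_iff_getD.1 hxc
      have hknd : k < n - d := by omega
      refine ⟨(0, k), ?_, ?_⟩
      · simp only [Set.mem_setOf_eq]; rw [hgetD0]; exact hknd
      · rw [hval0 k hknd, hkeq]
  · -- rows increasing
    intro i j j' hjj hj'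
    rcases Nat.eq_zero_or_pos i with rfl | hi
    · rw [hgetD0] at hj'
      rw [hval0 j (by omega), hval0 j' hj']
      exact sorted_getD_lt (hc ▸ cList_sorted n v) hjj (by omega)
    · rw [hgetDS i (by omega)] at hj'
      obtain ⟨a, rfl⟩ : ∃ k, i = k + 1 := ⟨i - 1, by omega⟩
      rw [Nat.add_sub_cancel] at hj'
      rw [hvalS a j (by omega), hvalS a j' hj']
      have h1 := hTmem a j (by omega)
      have h2 := hTmem a j' hj'
      have h3 := hTrow a j j' hjj hj'
      exact sorted_getD_lt hvsorted (by omega) (by omega)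
  · -- columns increasing
    intro i i' j hii' hj
    rw [hgetDS i' (by omega)] at hj
    obtain ⟨b, rfl⟩ : ∃ k, i' = k + 1 := ⟨i' - 1, by omega⟩
    rw [Nat.add_sub_cancel] at hj
    have hjd : j < d := by
      have h1 : t.getD b 0 ≤ t.getD 0 0 := getD_antitone hsort (Nat.zero_le b)
      have h2 := getD_le_sum t 0
      omega
    rcases Nat.eq_zero_or_pos i with rfl | hi
    · rw [hval0 j (by omega), hvalS b j hj]
      have hstep : c.getD j 0 < v.getD j 0 :=
        hc ▸ cList_getD_lt hvsorted hvmem (by omega) (hvgrow j (by omega)) (by rw [← hc]; omega)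
      refine lt_of_lt_of_le hstep ?_
      have h1 := hTge b j hj
      have h2 := hTmem b j hj
      exact sorted_getD_le hvsorted (by omega) (by omega)
    · obtain ⟨a, rfl⟩ : ∃ k, i = k + 1 := ⟨i - 1, by omega⟩
      have hab : a < b := by omega
      have hja : j < t.getD a 0 :=
        lt_of_lt_of_le hj (getD_antitone hsort (by omega))
      rw [hvalS a j hja, hvalS b j hj]
      have h1 := hTmem a j hja
      have h2 := hTmem b j hj
      have h3 := hTcol a b j hab hj
      exact sorted_getD_lt hvsorted (by omega) (by omega)

end Construct

end SYTAux

namespace SYTAux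
lemma buildT_valS (nd : ℕ) (t v c : List ℕ) (T : ℕ × ℕ → ℕ) (i j : ℕ)
    (h : j < t.getD i 0) :
    buildT nd t v c T (i + 1, j) = v.getD (T (i, j) - 1) 0 := by
  simp only [buildT]
  rw [if_neg (Nat.succ_ne_zero i), Nat.add_sub_cancel, if_pos h]

lemma buildT_lower_mem {nd d : ℕ} {t v c : List ℕ} {T : ℕ × ℕ → ℕ}
    (hT : IsSYT t T) (hsum : t.sum = d) (hvlen : v.length = d) (y : ℕ) :
    y ∈ v ↔ ∃ i j, j < t.getD i 0 ∧ buildT nd t v c T (i + 1, j) = y := by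
  obtain ⟨hT0, hTbij, -, -⟩ := hT
  constructor
  · intro hy
    obtain ⟨k, hklt, hkeq⟩ := mem_iff_getD.1 hy
    have : (k + 1) ∈ Set.Icc 1 t.sum := by rw [Set.mem_Icc, hsum]; omega
    obtain ⟨⟨a, b⟩, hab, habeq⟩ := hTbij.surjOn this
    simp only [Set.mem_setOf_eq] at hab
    refine ⟨a, b, hab, ?_⟩
    rw [buildT_valS nd t v c T a b hab]
    have hT' : T (a, b) = k + 1 := habeq
    rw [hT', Nat.add_sub_cancel, hkeq]
  · rintro ⟨i, j, hij, hval⟩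
    have hmem := hTbij.mapsTo (show (i, j) ∈ {p : ℕ × ℕ | p.2 < t.getD p.1 0} from hij)
    rw [Set.mem_Icc, hsum] at hmem
    rw [buildT_valS nd t v c T i j hij] at hval
    exact hval ▸ getD_mem (by omega)

/-- injectivity of the construction -/
lemma construct_inj {n d : ℕ} {t : List ℕ} {w₁ w₂ : List ℕ} {T₁ T₂ : ℕ × ℕ → ℕ}
    (ht : t.sum = d)
    (hw₁ : w₁.Pairwise (· < ·)) (hw₁len : w₁.length = d)
    (hw₂ : w₂.Pairwise (· < ·)) (hw₂len : w₂.length = d)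
    (hT₁ : IsSYT t T₁) (hT₂ : IsSYT t T₂)
    (heq : buildT (n - d) t (vList w₁) (cList n (vList w₁)) T₁
         = buildT (n - d) t (vList w₂) (cList n (vList w₂)) T₂) :
    w₁ = w₂ ∧ T₁ = T₂ := by
  set v₁ := vList w₁ with hv₁
  set v₂ := vList w₂ with hv₂
  have hv₁len : v₁.length = d := by rw [hv₁, vList_length, hw₁len]
  have hv₂len : v₂.length = d := by rw [hv₂, vList_length, hw₂len]
  have hv₁s : v₁.Pairwise (· < ·) := vList_sorted (hw₁.imp le_of_lt)
  have hv₂s : v₂.Pairwise (· < ·) := vList_sorted (hw₂.imp le_of_lt)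
  have hveq : v₁ = v₂ := by
    apply List.Perm.eq_of_pairwise' (hv₁s.imp le_of_lt) (hv₂s.imp le_of_lt)
    apply List.perm_of_nodup_nodup_toFinset_eq hv₁s.nodup hv₂s.nodup
    ext x
    simp only [List.mem_toFinset]
    rw [buildT_lower_mem (nd := n - d) (c := cList n v₁) hT₁ ht hv₁len,
      buildT_lower_mem (nd := n - d) (c := cList n v₂) hT₂ ht hv₂len, heq]
  have hweq : w₁ = w₂ := by
    apply List.ext_get (by omega)
    intro i h1 h2
    have hi : i < d := by omega
    have g₁ := vList_getD (w := w₁) (i := i) (by omega)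
    have g₂ := vList_getD (w := w₂) (i := i) (by omega)
    rw [← hv₁] at g₁
    rw [← hv₂] at g₂
    rw [hveq] at g₁
    have : w₁.getD i 0 = w₂.getD i 0 := by omega
    rw [List.getD_eq_getElem _ _ h1, List.getD_eq_getElem _ _ h2] at this
    simpa [List.get_eq_getElem] using this
  refine ⟨hweq, ?_⟩
  obtain ⟨hT₁0, hT₁bij, -, -⟩ := hT₁
  obtain ⟨hT₂0, hT₂bij, -, -⟩ := hT₂
  funext p
  rcases p with ⟨i, j⟩
  by_cases hij : j < t.getD i 0
  · have e₁ := buildT_valS (n - d) t v₁ (cList n v₁) T₁ i j hij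
    have e₂ := buildT_valS (n - d) t v₂ (cList n v₂) T₂ i j hij
    rw [heq] at e₁
    have hvv : v₁.getD (T₁ (i, j) - 1) 0 = v₂.getD (T₂ (i, j) - 1) 0 := by
      rw [← e₁, ← e₂]
    rw [← hveq] at hvv
    have m₁ := hT₁bij.mapsTo (show (i, j) ∈ {p : ℕ × ℕ | p.2 < t.getD p.1 0} from hij)
    have m₂ := hT₂bij.mapsTo (show (i, j) ∈ {p : ℕ × ℕ | p.2 < t.getD p.1 0} from hij)
    rw [Set.mem_Icc, ht] at m₁ m₂
    have := nodup_getD_inj hv₁s.nodup (by omega) (by omega) hvv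
    omega
  · rw [hT₁0 (i, j) hij, hT₂0 (i, j) hij]

/-- SYTs of a given shape form a finite type -/
lemma finite_syt (L : List ℕ) : Finite {T : ℕ × ℕ → ℕ // IsSYT L T} := by
  classical
  have hbound : ∀ (T : {T : ℕ × ℕ → ℕ // IsSYT L T}) (p : ℕ × ℕ), T.1 p ≤ L.sum := by
    intro T p
    by_cases h : p.2 < L.getD p.1 0
    · exact (Set.mem_Icc.1 (T.2.2.1.mapsTo (show p ∈ {p : ℕ × ℕ | p.2 < L.getD p.1 0} from h))).2
    · rw [T.2.1 p h]; exact Nat.zero_le _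
  set s : Finset (ℕ × ℕ) := Finset.range L.length ×ˢ Finset.range (L.sum + 1) with hs
  apply Finite.of_injective
    (f := fun T : {T : ℕ × ℕ → ℕ // IsSYT L T} =>
      (fun p : s => (⟨T.1 p.1, Nat.lt_succ_of_le (hbound T p.1)⟩ : Fin (L.sum + 1))))
  rintro T₁ T₂ h
  apply Subtype.ext
  funext p
  by_cases hp : p.2 < L.getD p.1 0
  · have hp1 : p.1 < L.length := by
      by_contra hc
      push_neg at hc
      rw [List.getD_eq_default _ _ hc] at hp
      omega
    have hp2 : p.2 < L.sum + 1 := by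
      have := getD_le_sum L p.1
      omega
    have hps : p ∈ s := by
      rw [hs, Finset.mem_product, Finset.mem_range, Finset.mem_range]
      exact ⟨hp1, hp2⟩
    have := congrFun h ⟨p, hps⟩
    simpa using congrArg Fin.val this
  · rw [T₁.2.1 p hp, T₂.2.1 p hp]

end SYTAux

open SYTAux in
theorem syt_lower_bound (n d : ℕ) (hd : 0 < d) (hnd : 2 * d ≤ n)
    (L : List ℕ) (hL : IsPartitionList L n) (h1 : L.headD 0 = n - d) :
    (n - d).choose d * sytCount L.tail ≤ sytCount L := by
  classical
  have hn : 0 < n := by omega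
  have hLne : L ≠ [] := by
    intro h
    rw [h] at hL
    obtain ⟨-, -, hsum⟩ := hL
    simp at hsum
    omega
  obtain ⟨a, t, rfl⟩ : ∃ a t, L = a :: t := ⟨L.head hLne, L.tail, (List.cons_head_tail hLne).symm⟩
  have ha : a = n - d := by simpa using h1
  subst ha
  obtain ⟨hsort, hpos, hsum⟩ := hL
  rw [List.sum_cons] at hsum
  have htsum : t.sum = d := by omega
  have ht : IsPartitionList t d :=
    ⟨(List.pairwise_cons.1 hsort).2, fun x hx => hpos x (List.mem_cons_of_mem _ hx), htsum⟩
  have htail : (((n - d) :: t)).tail = t := rfl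
  rw [htail]
  -- the injection
  set A := {W : Finset ℕ // W ∈ Finset.powersetCard d (Finset.Icc 1 (n - d))} with hA
  have hWfacts : ∀ W : A, (W.1.sort (· ≤ ·)).Pairwise (· < ·)
      ∧ (W.1.sort (· ≤ ·)).length = d
      ∧ (∀ x ∈ W.1.sort (· ≤ ·), 1 ≤ x ∧ x ≤ n - d) := by
    rintro ⟨W, hW⟩
    rw [Finset.mem_powersetCard] at hW
    refine ⟨List.sortedLT_iff_pairwise.1 (Finset.sortedLT_sort W), ?_, ?_⟩
    · rw [Finset.length_sort]; exact hW.2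
    · intro x hx
      rw [Finset.mem_sort] at hx
      have := hW.1 hx
      rw [Finset.mem_Icc] at this
      exact this
  let Φ : A × {T : ℕ × ℕ → ℕ // IsSYT t T} → {T : ℕ × ℕ → ℕ // IsSYT ((n - d) :: t) T} :=
    fun x => ⟨buildT (n - d) t (vList (x.1.1.sort (· ≤ ·)))
        (cList n (vList (x.1.1.sort (· ≤ ·)))) x.2.1,
      construct_isSYT hd hnd ht (hWfacts x.1).1 (hWfacts x.1).2.1 (hWfacts x.1).2.2 x.2.2⟩
  have hΦinj : Function.Injective Φ := by
    rintro ⟨W₁, T₁⟩ ⟨W₂, T₂⟩ h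
    have heq := congrArg Subtype.val h
    obtain ⟨hw, hT⟩ := construct_inj (n := n) htsum
      (hWfacts W₁).1 (hWfacts W₁).2.1 (hWfacts W₂).1 (hWfacts W₂).2.1 T₁.2 T₂.2 heq
    have hWeq : W₁ = W₂ := by
      apply Subtype.ext
      rw [← Finset.sort_toFinset (r := (· ≤ ·)) (s := W₁.1), ← Finset.sort_toFinset (r := (· ≤ ·)) (s := W₂.1), hw]
    rw [Prod.mk.injEq]
    exact ⟨hWeq, Subtype.ext hT⟩
  have hfin : Finite {T : ℕ × ℕ → ℕ // IsSYT ((n - d) :: t) T} := finite_syt _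
  calc (n - d).choose d * sytCount t
      = Nat.card A * Nat.card {T : ℕ × ℕ → ℕ // IsSYT t T} := by
        rw [sytCount, hA, Nat.card_eq_finsetCard, Finset.card_powersetCard, Nat.card_Icc]
        norm_num
    _ = Nat.card (A × {T : ℕ × ℕ → ℕ // IsSYT t T}) := (Nat.card_prod _ _).symm
    _ ≤ Nat.card {T : ℕ × ℕ → ℕ // IsSYT ((n - d) :: t) T} :=
        Nat.card_le_card_of_injective Φ hΦinj
    _ = sytCount ((n - d) :: t) := rfl
end

section
/- Let $\lambda \vdash n$ be a partition with $\lambda_1 = n - d$ where $d \le n$. Then the dimension of the irreducible representation of $S_n$ indexed by $\lambda$ (equivalently, the number of standard Young tableaux of shape $\lambda$) is at most $n^d / \sqrt{d!}$. -/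
open Finset

namespace SytAux

/-- `c` is a removable corner of `μ`. -/
def IsRemovable (μ : YoungDiagram) (c : ℕ × ℕ) : Prop :=
  c ∈ μ ∧ (c.1 + 1, c.2) ∉ μ ∧ (c.1, c.2 + 1) ∉ μ

/-- `c` is an addable corner of `μ`. -/
def IsAddable (μ : YoungDiagram) (c : ℕ × ℕ) : Prop :=
  c ∉ μ ∧ (∀ i < c.1, (i, c.2) ∈ μ) ∧ (∀ j < c.2, (c.1, j) ∈ μ)

theorem isRemovable_lower {μ : YoungDiagram} {c : ℕ × ℕ} (h : IsRemovable μ c) :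
    IsLowerSet (↑(μ.cells.erase c) : Set (ℕ × ℕ)) := by
  intro e d hde he
  simp only [Finset.coe_erase, Set.mem_diff, Finset.mem_coe, YoungDiagram.mem_cells,
    Set.mem_singleton_iff] at he ⊢
  obtain ⟨he, hec⟩ := he
  refine ⟨μ.isLowerSet hde he, ?_⟩
  rintro rfl
  obtain ⟨hd1, hd2⟩ := hde
  rcases lt_or_eq_of_le hd1 with h1 | h1
  · exact h.2.1 (μ.up_left_mem h1 hd2 he)
  · rcases lt_or_eq_of_le hd2 with h2 | h2
    · exact h.2.2 (μ.up_left_mem hd1 h2 he)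
    · exact hec (Prod.ext h1.symm h2.symm ▸ rfl)

theorem isAddable_lower {μ : YoungDiagram} {c : ℕ × ℕ} (h : IsAddable μ c) :
    IsLowerSet (↑(insert c μ.cells) : Set (ℕ × ℕ)) := by
  intro e d hde he
  simp only [Finset.coe_insert, Set.mem_insert_iff, Finset.mem_coe,
    YoungDiagram.mem_cells] at he ⊢
  rcases he with rfl | he
  · obtain ⟨hd1, hd2⟩ := hde
    rcases lt_or_eq_of_le hd1 with h1 | h1
    · exact Or.inr (μ.up_left_mem (le_refl d.1) hd2 (h.2.1 d.1 h1))
    · rcases lt_or_eq_of_le hd2 with h2 | h2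
      · exact Or.inr (μ.up_left_mem hd1 (le_refl d.2) (h.2.2 d.2 h2))
      · exact Or.inl (Prod.ext h1 h2)
  · exact Or.inr (μ.isLowerSet hde he)

open Classical in
/-- Erase a cell from a Young diagram (identity if the cell is not removable). -/
noncomputable def eraseY (μ : YoungDiagram) (c : ℕ × ℕ) : YoungDiagram :=
  if h : IsRemovable μ c then ⟨μ.cells.erase c, isRemovable_lower h⟩ else μ

open Classical in
/-- Insert a cell into a Young diagram (identity if the cell is not addable). -/
noncomputable def insertY (μ : YoungDiagram) (c : ℕ × ℕ) : YoungDiagram :=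
  if h : IsAddable μ c then ⟨insert c μ.cells, isAddable_lower h⟩ else μ

theorem mem_eraseY {μ : YoungDiagram} {c : ℕ × ℕ} (h : IsRemovable μ c) (x : ℕ × ℕ) :
    x ∈ eraseY μ c ↔ x ∈ μ ∧ x ≠ c := by
  rw [eraseY, dif_pos h]
  simp [Finset.mem_erase, and_comm]

theorem mem_insertY {μ : YoungDiagram} {c : ℕ × ℕ} (h : IsAddable μ c) (x : ℕ × ℕ) :
    x ∈ insertY μ c ↔ x ∈ μ ∨ x = c := by
  rw [insertY, dif_pos h]
  simp [Finset.mem_insert, or_comm]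

theorem card_eraseY {μ : YoungDiagram} {c : ℕ × ℕ} (h : IsRemovable μ c) :
    (eraseY μ c).card = μ.card - 1 := by
  rw [eraseY, dif_pos h]
  exact Finset.card_erase_of_mem h.1

theorem card_insertY {μ : YoungDiagram} {c : ℕ × ℕ} (h : IsAddable μ c) :
    (insertY μ c).card = μ.card + 1 := by
  rw [insertY, dif_pos h]
  exact Finset.card_insert_of_notMem h.1

theorem insertY_eraseY {μ : YoungDiagram} {c : ℕ × ℕ} (h : IsRemovable μ c) :
    insertY (eraseY μ c) c = μ := by
  have ha : IsAddable (eraseY μ c) c := by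
    refine ⟨by simp [mem_eraseY h], fun i hi => ?_, fun j hj => ?_⟩
    · rw [mem_eraseY h]
      exact ⟨μ.up_left_mem hi.le le_rfl h.1, by simp [Prod.ext_iff, hi.ne]⟩
    · rw [mem_eraseY h]
      exact ⟨μ.up_left_mem le_rfl hj.le h.1, by simp [Prod.ext_iff, hj.ne]⟩
  ext x
  rw [YoungDiagram.mem_cells, YoungDiagram.mem_cells, mem_insertY ha, mem_eraseY h]
  constructor
  · rintro (⟨hx, _⟩ | rfl)
    · exact hx
    · exact h.1
  · intro hx
    by_cases hxc : x = c
    · exact Or.inr hxc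
    · exact Or.inl ⟨hx, hxc⟩

theorem isAddable_eraseY {μ : YoungDiagram} {c : ℕ × ℕ} (h : IsRemovable μ c) :
    IsAddable (eraseY μ c) c := by
  refine ⟨by simp [mem_eraseY h], fun i hi => ?_, fun j hj => ?_⟩
  · rw [mem_eraseY h]
    exact ⟨μ.up_left_mem hi.le le_rfl h.1, by simp [Prod.ext_iff, hi.ne]⟩
  · rw [mem_eraseY h]
    exact ⟨μ.up_left_mem le_rfl hj.le h.1, by simp [Prod.ext_iff, hj.ne]⟩

theorem eraseY_insertY {μ : YoungDiagram} {c : ℕ × ℕ} (h : IsAddable μ c) :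
    eraseY (insertY μ c) c = μ := by
  have hr : IsRemovable (insertY μ c) c := by
    refine ⟨by simp [mem_insertY h], ?_, ?_⟩
    · rw [mem_insertY h]
      rintro (hx | hx)
      · exact h.1 (μ.up_left_mem (Nat.le_succ _) le_rfl hx)
      · simp [Prod.ext_iff] at hx
    · rw [mem_insertY h]
      rintro (hx | hx)
      · exact h.1 (μ.up_left_mem le_rfl (Nat.le_succ _) hx)
      · simp [Prod.ext_iff] at hx
  ext x
  rw [YoungDiagram.mem_cells, YoungDiagram.mem_cells, mem_eraseY hr, mem_insertY h]
  constructor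
  · rintro ⟨hx | rfl, hxc⟩
    · exact hx
    · exact absurd rfl hxc
  · intro hx
    exact ⟨Or.inl hx, fun hxc => h.1 (hxc ▸ hx)⟩

theorem isRemovable_insertY {μ : YoungDiagram} {c : ℕ × ℕ} (h : IsAddable μ c) :
    IsRemovable (insertY μ c) c := by
  refine ⟨by simp [mem_insertY h], ?_, ?_⟩
  · rw [mem_insertY h]
    rintro (hx | hx)
    · exact h.1 (μ.up_left_mem (Nat.le_succ _) le_rfl hx)
    · simp [Prod.ext_iff] at hx
  · rw [mem_insertY h]
    rintro (hx | hx)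
    · exact h.1 (μ.up_left_mem le_rfl (Nat.le_succ _) hx)
    · simp [Prod.ext_iff] at hx

end SytAux

namespace SytAux

open Classical in
/-- The finset of removable corners. -/
noncomputable def removables (μ : YoungDiagram) : Finset (ℕ × ℕ) :=
  μ.cells.filter (fun c => IsRemovable μ c)

theorem mem_removables {μ : YoungDiagram} {c : ℕ × ℕ} :
    c ∈ removables μ ↔ IsRemovable μ c := by
  classical
  simp only [removables, Finset.mem_filter, YoungDiagram.mem_cells]
  exact ⟨fun h => h.2, fun h => ⟨h.1, h⟩⟩

theorem isAddable_bound {μ : YoungDiagram} {c : ℕ × ℕ} (h : IsAddable μ c) :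
    c.1 ≤ μ.card ∧ c.2 ≤ μ.card := by
  constructor
  · have : (Finset.range c.1).card ≤ μ.cells.card := by
      apply Finset.card_le_card_of_injOn (fun i => (i, c.2))
      · intro i hi
        simpa using h.2.1 i (Finset.mem_range.mp hi)
      · intro a _ b _ hab
        simpa using congrArg Prod.fst hab
    simpa using this
  · have : (Finset.range c.2).card ≤ μ.cells.card := by
      apply Finset.card_le_card_of_injOn (fun j => (c.1, j))
      · intro j hj
        simpa using h.2.2 j (Finset.mem_range.mp hj)
      · intro a _ b _ hab
        simpa using congrArg Prod.snd hab
    simpa using this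

open Classical in
/-- The finset of addable corners. -/
noncomputable def addables (μ : YoungDiagram) : Finset (ℕ × ℕ) :=
  ((Finset.range (μ.card + 1)) ×ˢ (Finset.range (μ.card + 1))).filter (fun c => IsAddable μ c)

theorem mem_addables {μ : YoungDiagram} {c : ℕ × ℕ} :
    c ∈ addables μ ↔ IsAddable μ c := by
  classical
  simp only [addables, Finset.mem_filter, Finset.mem_product, Finset.mem_range]
  refine ⟨fun h => h.2, fun h => ⟨⟨?_, ?_⟩, h⟩⟩
  · exact Nat.lt_succ_of_le (isAddable_bound h).1
  · exact Nat.lt_succ_of_le (isAddable_bound h).2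

theorem removable_iff_rowLen {μ : YoungDiagram} {i j : ℕ} :
    IsRemovable μ (i, j) ↔ j + 1 = μ.rowLen i ∧ μ.rowLen (i + 1) ≤ j := by
  simp only [IsRemovable, YoungDiagram.mem_iff_lt_rowLen, not_lt]
  omega

theorem addable_iff_rowLen {μ : YoungDiagram} {i j : ℕ} :
    IsAddable μ (i, j) ↔ j = μ.rowLen i ∧ (i = 0 ∨ μ.rowLen i < μ.rowLen (i - 1)) := by
  simp only [IsAddable, YoungDiagram.mem_iff_lt_rowLen, not_lt]
  constructor
  · rintro ⟨h1, h2, h3⟩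
    have hj : j = μ.rowLen i := by
      rcases Nat.eq_zero_or_pos j with rfl | hj0
      · omega
      · have := h3 (j-1) (by omega)
        omega
    subst hj
    refine ⟨rfl, ?_⟩
    rcases Nat.eq_zero_or_pos i with rfl | hi0
    · exact Or.inl rfl
    · exact Or.inr (by have := h2 (i-1) (by omega); omega)
  · rintro ⟨rfl, h2⟩
    refine ⟨le_rfl, fun i' hi' => ?_, fun j' hj' => hj'⟩
    rcases h2 with rfl | h2
    · omega
    · calc μ.rowLen i < μ.rowLen (i-1) := h2
        _ ≤ μ.rowLen i' := μ.rowLen_anti i' (i-1) (by omega)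

theorem mem_addables_rl {μ : YoungDiagram} {i j : ℕ} :
    (i, j) ∈ addables μ ↔ j = μ.rowLen i ∧ (i = 0 ∨ μ.rowLen i < μ.rowLen (i - 1)) := by
  rw [mem_addables, addable_iff_rowLen]

theorem mem_removables_rl {μ : YoungDiagram} {i j : ℕ} :
    (i, j) ∈ removables μ ↔ j + 1 = μ.rowLen i ∧ μ.rowLen (i + 1) ≤ j := by
  rw [mem_removables, removable_iff_rowLen]

/-- Key fact: the number of addable corners is one more than the number of removable corners. -/
theorem card_addables (μ : YoungDiagram) :
    (addables μ).card = (removables μ).card + 1 := by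
  classical
  have h0 : (0, μ.rowLen 0) ∈ addables μ := by
    rw [mem_addables_rl]
    exact ⟨rfl, Or.inl rfl⟩
  rw [← Finset.card_erase_add_one h0]
  congr 1
  apply Finset.card_nbij' (fun c => (c.1 - 1, μ.rowLen (c.1 - 1) - 1))
    (fun c => (c.1 + 1, μ.rowLen (c.1 + 1)))
  · -- erase → removables
    rintro ⟨i, j⟩ hc
    simp only [Finset.mem_coe, Finset.mem_erase, mem_addables_rl] at hc
    obtain ⟨hne, rfl, h2⟩ := hc
    have hi : 0 < i := by
      rcases Nat.eq_zero_or_pos i with rfl | h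
      · exact absurd rfl hne
      · exact h
    have h3 : μ.rowLen i < μ.rowLen (i - 1) := by
      rcases h2 with h2 | h2
      · omega
      · exact h2
    have hij : i - 1 + 1 = i := by omega
    dsimp only
    rw [Finset.mem_coe, mem_removables_rl, hij]
    omega
  · -- removables → erase
    rintro ⟨i, j⟩ hc
    rw [Finset.mem_coe, mem_removables_rl] at hc
    dsimp only
    simp only [Finset.mem_coe, Finset.mem_erase, mem_addables_rl]
    refine ⟨by simp [Prod.ext_iff], trivial, Or.inr ?_⟩
    simp only [Nat.add_sub_cancel]
    omega
  · -- round trip on erase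
    rintro ⟨i, j⟩ hc
    simp only [Finset.mem_coe, Finset.mem_erase, mem_addables_rl] at hc
    obtain ⟨hne, rfl, h2⟩ := hc
    have hi : 0 < i := by
      rcases Nat.eq_zero_or_pos i with rfl | h
      · exact absurd rfl hne
      · exact h
    have h3 : μ.rowLen i < μ.rowLen (i - 1) := by
      rcases h2 with h2 | h2
      · omega
      · exact h2
    have hij : i - 1 + 1 = i := by omega
    dsimp only
    rw [hij]
  · -- round trip on removables
    rintro ⟨i, j⟩ hc
    rw [Finset.mem_coe, mem_removables_rl] at hc
    dsimp only
    simp only [Nat.add_sub_cancel, Prod.ext_iff]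
    exact ⟨trivial, by omega⟩

end SytAux

namespace SytAux

theorem cross_mp {μ : YoungDiagram} {c c' : ℕ × ℕ} (hcc : c ≠ c')
    (hc : IsAddable μ c) (hc' : IsRemovable (insertY μ c) c') :
    IsRemovable μ c' ∧ IsAddable (eraseY μ c') c := by
  obtain ⟨h1, h2, h3⟩ := hc'
  rw [mem_insertY hc] at h1 h2 h3
  have hrem : IsRemovable μ c' := by
    refine ⟨?_, fun h => h2 (Or.inl h), fun h => h3 (Or.inl h)⟩
    rcases h1 with h | h
    · exact h
    · exact absurd h.symm hcc
  refine ⟨hrem, ?_, fun i hi => ?_, fun j hj => ?_⟩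
  · rw [mem_eraseY hrem]
    rintro ⟨hcmu, -⟩
    exact hc.1 hcmu
  · rw [mem_eraseY hrem]
    refine ⟨hc.2.1 i hi, fun he => ?_⟩
    -- he : (i, c.2) = c'
    rcases Nat.lt_or_ge (i+1) c.1 with h | h
    · exact h2 (Or.inl (by rw [← he] at *; exact hc.2.1 (i+1) h))
    · have : c = (i+1, c.2) := by
        have : c.1 = i + 1 := by omega
        exact Prod.ext this rfl
      exact h2 (Or.inr (by rw [← he, this]))
  · rw [mem_eraseY hrem]
    refine ⟨hc.2.2 j hj, fun he => ?_⟩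
    rcases Nat.lt_or_ge (j+1) c.2 with h | h
    · exact h3 (Or.inl (by rw [← he] at *; exact hc.2.2 (j+1) h))
    · have : c = (c.1, j+1) := by
        have : c.2 = j + 1 := by omega
        exact Prod.ext rfl this
      exact h3 (Or.inr (by rw [← he, this]))

theorem cross_mpr {μ : YoungDiagram} {c c' : ℕ × ℕ} (hcc : c ≠ c')
    (hc' : IsRemovable μ c') (hc : IsAddable (eraseY μ c') c) :
    IsAddable μ c ∧ IsRemovable (insertY μ c) c' := by
  have hadd : IsAddable μ c := by
    refine ⟨fun h => hc.1 ((mem_eraseY hc' c).mpr ⟨h, hcc⟩), fun i hi => ?_, fun j hj => ?_⟩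
    · exact ((mem_eraseY hc' _).mp (hc.2.1 i hi)).1
    · exact ((mem_eraseY hc' _).mp (hc.2.2 j hj)).1
  refine ⟨hadd, ?_, ?_, ?_⟩
  · rw [mem_insertY hadd]
    exact Or.inl hc'.1
  · rw [mem_insertY hadd]
    rintro (h | rfl)
    · exact hc'.2.1 h
    · have h1 := hc.2.1 c'.1 (by dsimp; omega)
      rw [mem_eraseY hc'] at h1
      exact h1.2 (by simp)
  · rw [mem_insertY hadd]
    rintro (h | rfl)
    · exact hc'.2.2 h
    · have h1 := hc.2.2 c'.2 (by dsimp; omega)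
      rw [mem_eraseY hc'] at h1
      exact h1.2 (by simp)

theorem erase_insert_comm {μ : YoungDiagram} {c c' : ℕ × ℕ} (hcc : c ≠ c')
    (hc : IsAddable μ c) (hc'i : IsRemovable (insertY μ c) c')
    (hc' : IsRemovable μ c') (hce : IsAddable (eraseY μ c') c) :
    eraseY (insertY μ c) c' = insertY (eraseY μ c') c := by
  ext x
  rw [YoungDiagram.mem_cells, YoungDiagram.mem_cells, mem_eraseY hc'i, mem_insertY hc,
    mem_insertY hce, mem_eraseY hc']
  constructor
  · rintro ⟨h | rfl, hxc'⟩
    · exact Or.inl ⟨h, hxc'⟩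
    · exact Or.inr rfl
  · rintro (⟨h, hxc'⟩ | rfl)
    · exact ⟨Or.inl h, hxc'⟩
    · exact ⟨Or.inr rfl, hcc⟩

theorem card_pos_of_ne_bot {μ : YoungDiagram} (h : μ ≠ ⊥) : 0 < μ.card := by
  rw [Finset.card_pos]
  by_contra hne
  rw [Finset.not_nonempty_iff_eq_empty] at hne
  exact h (by ext x; simp [hne])

open Classical in
/-- The number of standard Young tableaux of a given shape, defined by the branching recursion. -/
noncomputable def fY (μ : YoungDiagram) : ℕ :=
  if h : μ = ⊥ then 1 else
    ∑ c ∈ (removables μ).attach,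
      have : (eraseY μ c.1).card < μ.card := by
        rw [card_eraseY (mem_removables.mp c.2)]
        have := card_pos_of_ne_bot h
        omega
      fY (eraseY μ c.1)
termination_by μ.card

theorem fY_bot : fY ⊥ = 1 := by rw [fY.eq_def, dif_pos rfl]

theorem fY_spec {μ : YoungDiagram} (h : μ ≠ ⊥) :
    fY μ = ∑ c ∈ removables μ, fY (eraseY μ c) := by
  classical
  rw [fY.eq_def, dif_neg h, Finset.sum_attach (removables μ) (fun c => fY (eraseY μ c))]

end SytAux

namespace SytAux

theorem ne_bot_of_card {μ : YoungDiagram} (h : 0 < μ.card) : μ ≠ ⊥ := by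
  intro hb
  rw [hb] at h
  simp [YoungDiagram.cells_bot] at h

theorem insertY_ne_bot {μ : YoungDiagram} {c : ℕ × ℕ} (h : IsAddable μ c) :
    insertY μ c ≠ ⊥ := by
  apply ne_bot_of_card
  rw [card_insertY h]
  omega

theorem removables_ne_bot {μ : YoungDiagram} {c : ℕ × ℕ} (h : c ∈ removables μ) : μ ≠ ⊥ := by
  apply ne_bot_of_card
  rw [mem_removables] at h
  exact Finset.card_pos.mpr ⟨c, h.1⟩

/-- The up-down identity: inserting a box in all possible ways counts `(|μ| + 1) fY μ`. -/
theorem sum_addables_fY : ∀ (n : ℕ) (μ : YoungDiagram), μ.card = n →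
    ∑ c ∈ addables μ, fY (insertY μ c) = (n + 1) * fY μ := by
  intro n
  induction n using Nat.strong_induction_on with
  | _ n IH =>
    intro μ hcard
    -- Step 1: expand each term
    have step1 : ∀ c ∈ addables μ, fY (insertY μ c) =
        fY μ + ∑ c' ∈ (removables (insertY μ c)).erase c, fY (eraseY (insertY μ c) c') := by
      intro c hc
      rw [mem_addables] at hc
      rw [fY_spec (insertY_ne_bot hc)]
      rw [← Finset.add_sum_erase _ _ (mem_removables.mpr (isRemovable_insertY hc))]
      rw [eraseY_insertY hc]
    rw [Finset.sum_congr rfl step1, Finset.sum_add_distrib, Finset.sum_const, smul_eq_mul]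
    -- Step 2: swap the double sum
    have step2 : ∑ c ∈ addables μ, ∑ c' ∈ (removables (insertY μ c)).erase c,
          fY (eraseY (insertY μ c) c')
        = ∑ c' ∈ removables μ, ∑ c ∈ (addables (eraseY μ c')).erase c',
          fY (insertY (eraseY μ c') c) := by
      rw [Finset.sum_sigma', Finset.sum_sigma']
      refine Finset.sum_bij' (fun x _ => (⟨x.2, x.1⟩ : Σ _ : ℕ × ℕ, ℕ × ℕ))
        (fun x _ => (⟨x.2, x.1⟩ : Σ _ : ℕ × ℕ, ℕ × ℕ)) ?_ ?_ ?_ ?_ ?_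
      · rintro ⟨c, c'⟩ hx
        simp only [Finset.mem_sigma, Finset.mem_erase] at hx ⊢
        obtain ⟨hc, hc'ne, hc'⟩ := hx
        rw [mem_addables] at hc
        rw [mem_removables] at hc'
        have hcc : c ≠ c' := fun h => hc'ne h.symm
        obtain ⟨h1, h2⟩ := cross_mp hcc hc hc'
        exact ⟨mem_removables.mpr h1, hcc, mem_addables.mpr h2⟩
      · rintro ⟨c', c⟩ hx
        simp only [Finset.mem_sigma, Finset.mem_erase] at hx ⊢
        obtain ⟨hc', hcne, hc⟩ := hx
        rw [mem_removables] at hc'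
        rw [mem_addables] at hc
        obtain ⟨h1, h2⟩ := cross_mpr hcne hc' hc
        exact ⟨mem_addables.mpr h1, fun h => hcne h.symm, mem_removables.mpr h2⟩
      · rintro ⟨c, c'⟩ _
        rfl
      · rintro ⟨c', c⟩ _
        rfl
      · rintro ⟨c, c'⟩ hx
        simp only [Finset.mem_sigma, Finset.mem_erase] at hx
        obtain ⟨hc, hc'ne, hc'⟩ := hx
        rw [mem_addables] at hc
        rw [mem_removables] at hc'
        have hcc : c ≠ c' := fun h => hc'ne h.symm
        obtain ⟨h1, h2⟩ := cross_mp hcc hc hc'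
        exact congrArg fY (erase_insert_comm hcc hc hc' h1 h2)
    rw [step2]
    -- Step 3: inner sums via the induction hypothesis
    have step3 : ∀ c' ∈ removables μ,
        (∑ c ∈ (addables (eraseY μ c')).erase c', fY (insertY (eraseY μ c') c)) + fY μ
          = n * fY (eraseY μ c') := by
      intro c' hc'
      rw [mem_removables] at hc'
      have hμ : μ ≠ ⊥ := removables_ne_bot (mem_removables.mpr hc')
      have hn : 0 < n := by
        rw [← hcard]
        exact card_pos_of_ne_bot hμ
      have hadd : IsAddable (eraseY μ c') c' := isAddable_eraseY hc'
      have hcards : (eraseY μ c').card = n - 1 := by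
        rw [card_eraseY hc', hcard]
      have hins : insertY (eraseY μ c') c' = μ := insertY_eraseY hc'
      have := IH (n - 1) (by omega) (eraseY μ c') hcards
      calc (∑ c ∈ (addables (eraseY μ c')).erase c', fY (insertY (eraseY μ c') c)) + fY μ
          = fY (insertY (eraseY μ c') c') +
            ∑ c ∈ (addables (eraseY μ c')).erase c', fY (insertY (eraseY μ c') c) := by
            rw [hins]; ring
        _ = ∑ c ∈ addables (eraseY μ c'), fY (insertY (eraseY μ c') c) :=
            Finset.add_sum_erase _ (fun c => fY (insertY (eraseY μ c') c))
              (mem_addables.mpr hadd)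
        _ = (n - 1 + 1) * fY (eraseY μ c') := this
        _ = n * fY (eraseY μ c') := by congr 1; omega
    -- Combine
    have hX : (∑ c' ∈ removables μ, ∑ c ∈ (addables (eraseY μ c')).erase c',
          fY (insertY (eraseY μ c') c)) + (removables μ).card * fY μ
        = n * fY μ := by
      by_cases hμ : μ = ⊥
      · subst hμ
        have h1 : removables ⊥ = ∅ := by
          ext c
          simp only [mem_removables, Finset.notMem_empty, iff_false]
          intro h
          exact YoungDiagram.notMem_bot c h.1
        have h2 : n = 0 := by
          rw [← hcard]
          simp [YoungDiagram.cells_bot]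
        simp [h1, h2]
      · rw [← smul_eq_mul (a := (removables μ).card), ← Finset.sum_const,
          ← Finset.sum_add_distrib, Finset.sum_congr rfl step3, ← Finset.mul_sum, ← fY_spec hμ]
    have hA := card_addables μ
    -- goal : card(addables μ) * fY μ + (double sum) = (n+1) * fY μ
    apply Nat.add_right_cancel (m := (removables μ).card * fY μ)
    rw [add_assoc, hX, hA]
    ring

open Classical in
/-- Turn a finset into a Young diagram if possible. -/
noncomputable def toYD (s : Finset (ℕ × ℕ)) : YoungDiagram :=
  if h : IsLowerSet (↑s : Set (ℕ × ℕ)) then ⟨s, h⟩ else ⊥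

open Classical in
/-- The finset of all Young diagrams with `d` cells. -/
noncomputable def diags (d : ℕ) : Finset YoungDiagram :=
  ((Finset.range (d+1) ×ˢ Finset.range (d+1)).powerset.filter
    (fun s : Finset (ℕ × ℕ) => IsLowerSet (s : Set (ℕ × ℕ)) ∧ s.card = d)).image toYD

theorem mem_diags {d : ℕ} {μ : YoungDiagram} : μ ∈ diags d ↔ μ.card = d := by
  classical
  simp only [diags, Finset.mem_image, Finset.mem_filter, Finset.mem_powerset]
  constructor
  · rintro ⟨s, ⟨hsub, hlow, hcard⟩, rfl⟩
    rw [toYD, dif_pos hlow]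
    exact hcard
  · intro hcard
    refine ⟨μ.cells, ⟨fun c hc => ?_, μ.isLowerSet, hcard⟩, by rw [toYD, dif_pos μ.isLowerSet]⟩
    rw [YoungDiagram.mem_cells] at hc
    have h1 : c.1 < d + 1 := by
      have := YoungDiagram.mem_iff_lt_colLen.mp (show (c.1, c.2) ∈ μ from hc)
      have h2 : μ.colLen c.2 ≤ μ.card := by
        rw [YoungDiagram.colLen_eq_card]
        exact Finset.card_le_card (Finset.filter_subset _ _)
      omega
    have h2 : c.2 < d + 1 := by
      have := YoungDiagram.mem_iff_lt_rowLen.mp (show (c.1, c.2) ∈ μ from hc)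
      have h2 : μ.rowLen c.1 ≤ μ.card := by
        rw [YoungDiagram.rowLen_eq_card]
        exact Finset.card_le_card (Finset.filter_subset _ _)
      omega
    exact Finset.mem_product.mpr ⟨Finset.mem_range.mpr h1, Finset.mem_range.mpr h2⟩

/-- The sum of squares identity: `∑_{|μ| = d} (fY μ)² = d!`. -/
theorem sum_sq_fY (d : ℕ) : ∑ μ ∈ diags d, fY μ * fY μ = Nat.factorial d := by
  induction d with
  | zero =>
    have : diags 0 = {⊥} := by
      ext μ
      rw [mem_diags, Finset.mem_singleton]
      constructor
      · intro h
        ext c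
        simp only [YoungDiagram.cells_bot, Finset.notMem_empty, iff_false]
        rw [Finset.card_eq_zero] at h
        simp [h]
      · rintro rfl
        simp [YoungDiagram.cells_bot]
    rw [this]
    simp [fY_bot, Nat.factorial]
  | succ d IHd =>
    have expand : ∀ μ ∈ diags (d+1), fY μ * fY μ =
        ∑ c ∈ removables μ, fY μ * fY (eraseY μ c) := by
      intro μ hμ
      rw [mem_diags] at hμ
      have hne : μ ≠ ⊥ := ne_bot_of_card (by omega)
      nth_rewrite 1 [fY_spec hne]
      rw [Finset.sum_mul]
      exact Finset.sum_congr rfl (fun c _ => mul_comm _ _)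
    rw [Finset.sum_congr rfl expand]
    have swap : ∑ μ ∈ diags (d+1), ∑ c ∈ removables μ, fY μ * fY (eraseY μ c)
        = ∑ ν ∈ diags d, ∑ c ∈ addables ν, fY (insertY ν c) * fY ν := by
      rw [Finset.sum_sigma', Finset.sum_sigma']
      refine Finset.sum_bij' (fun x _ => (⟨eraseY x.1 x.2, x.2⟩ : Σ _ : YoungDiagram, ℕ × ℕ))
        (fun x _ => (⟨insertY x.1 x.2, x.2⟩ : Σ _ : YoungDiagram, ℕ × ℕ)) ?_ ?_ ?_ ?_ ?_
      · rintro ⟨μ, c⟩ hx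
        simp only [Finset.mem_sigma, mem_diags, mem_removables, mem_addables] at hx ⊢
        obtain ⟨hcard, hrem⟩ := hx
        refine ⟨?_, isAddable_eraseY hrem⟩
        rw [card_eraseY hrem, hcard]
        omega
      · rintro ⟨ν, c⟩ hx
        simp only [Finset.mem_sigma, mem_diags, mem_removables, mem_addables] at hx ⊢
        obtain ⟨hcard, hadd⟩ := hx
        exact ⟨by rw [card_insertY hadd, hcard], isRemovable_insertY hadd⟩
      · rintro ⟨μ, c⟩ hx
        simp only [Finset.mem_sigma, mem_diags, mem_removables] at hx
        dsimp only
        rw [insertY_eraseY hx.2]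
      · rintro ⟨ν, c⟩ hx
        simp only [Finset.mem_sigma, mem_diags, mem_addables] at hx
        dsimp only
        rw [eraseY_insertY hx.2]
      · rintro ⟨μ, c⟩ hx
        simp only [Finset.mem_sigma, mem_diags, mem_removables] at hx
        rw [insertY_eraseY hx.2]
    rw [swap]
    have inner : ∀ ν ∈ diags d, ∑ c ∈ addables ν, fY (insertY ν c) * fY ν
        = (d + 1) * (fY ν * fY ν) := by
      intro ν hν
      rw [mem_diags] at hν
      rw [← Finset.sum_mul, sum_addables_fY d ν hν]
      ring
    rw [Finset.sum_congr rfl inner, ← Finset.mul_sum, IHd]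
    rw [Nat.factorial_succ]

/-- Single-term bound: `fY μ ^ 2 ≤ |μ|!`. -/
theorem fY_sq_le (μ : YoungDiagram) : fY μ * fY μ ≤ Nat.factorial μ.card := by
  rw [← sum_sq_fY μ.card]
  exact Finset.single_le_sum (f := fun ν => fY ν * fY ν) (fun _ _ => Nat.zero_le _)
    (mem_diags.mpr rfl)

end SytAux

namespace SytAux

/-- Young-diagram version of the standard tableau predicate. -/
def IsSYTD (μ : YoungDiagram) (T : ℕ × ℕ → ℕ) : Prop :=
  (∀ p : ℕ × ℕ, p ∉ μ → T p = 0) ∧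
  Set.BijOn T (↑μ.cells : Set (ℕ × ℕ)) (Set.Icc 1 μ.card) ∧
  (∀ i j j' : ℕ, j < j' → (i, j') ∈ μ → T (i, j) < T (i, j')) ∧
  (∀ i i' j : ℕ, i < i' → (i', j) ∈ μ → T (i, j) < T (i', j))

theorem T_le_card {μ : YoungDiagram} {T : ℕ × ℕ → ℕ} (hT : IsSYTD μ T) {p : ℕ × ℕ}
    (hp : p ∈ μ) : 1 ≤ T p ∧ T p ≤ μ.card := by
  have := hT.2.1.1 (show p ∈ (↑μ.cells : Set (ℕ × ℕ)) by simpa using hp)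
  exact ⟨this.1, this.2⟩

theorem sytd_finite (μ : YoungDiagram) : Finite {T : ℕ × ℕ → ℕ // IsSYTD μ T} := by
  classical
  apply Finite.of_injective
    (fun T : {T : ℕ × ℕ → ℕ // IsSYTD μ T} =>
      (fun p : ↥μ.cells => (⟨T.1 p.1, (T_le_card T.2 (by simpa using p.2)).1,
        (T_le_card T.2 (by simpa using p.2)).2⟩ : Set.Icc 1 μ.card)))
  intro T₁ T₂ h
  apply Subtype.ext
  funext p
  by_cases hp : p ∈ μ
  · have := congrFun h ⟨p, hp⟩
    exact congrArg Subtype.val this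
  · rw [T₁.2.1 p hp, T₂.2.1 p hp]

instance (μ : YoungDiagram) : Finite {T : ℕ × ℕ → ℕ // IsSYTD μ T} := sytd_finite μ

theorem nat_card_sigma {ι : Type*} [Fintype ι] (f : ι → Type*) [∀ i, Finite (f i)] :
    Nat.card (Σ i, f i) = ∑ i, Nat.card (f i) := by
  classical
  letI : ∀ i, Fintype (f i) := fun i => Fintype.ofFinite _
  simp [Nat.card_eq_fintype_card, Fintype.card_sigma]

theorem card_sytd_le_fY : ∀ (n : ℕ) (μ : YoungDiagram), μ.card = n →
    Nat.card {T : ℕ × ℕ → ℕ // IsSYTD μ T} ≤ fY μ := by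
  intro n
  induction n using Nat.strong_induction_on with
  | _ n IH =>
    intro μ hcard
    by_cases hbot : μ = ⊥
    · subst hbot
      rw [fY_bot]
      have : Subsingleton {T : ℕ × ℕ → ℕ // IsSYTD ⊥ T} := by
        constructor
        rintro ⟨T₁, h₁⟩ ⟨T₂, h₂⟩
        apply Subtype.ext
        funext p
        show T₁ p = T₂ p
        rw [h₁.1 p (YoungDiagram.notMem_bot p), h₂.1 p (YoungDiagram.notMem_bot p)]
      exact Finite.card_le_one_iff_subsingleton.mpr this
    · have hpos : 0 < μ.card := card_pos_of_ne_bot hbot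
      have topcell : ∀ T : {T : ℕ × ℕ → ℕ // IsSYTD μ T},
          ∃ c, c ∈ μ ∧ T.1 c = μ.card := by
        intro T
        obtain ⟨c, hc, hTc⟩ := T.2.2.1.2.2 (Set.mem_Icc.mpr ⟨hpos, le_rfl⟩)
        exact ⟨c, by simpa using hc, hTc⟩
      have toprem : ∀ (T : ℕ × ℕ → ℕ), IsSYTD μ T → ∀ c : ℕ × ℕ,
          c ∈ μ → T c = μ.card → IsRemovable μ c := by
        intro T hT c hc hTc
        refine ⟨hc, fun hmem => ?_, fun hmem => ?_⟩
        · have h1 := hT.2.2.2 c.1 (c.1+1) c.2 (Nat.lt_succ_self _) hmem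
          have h2 := (T_le_card hT hmem).2
          simp only [Prod.mk.eta] at h1
          omega
        · have h1 := hT.2.2.1 c.1 c.2 (c.2+1) (Nat.lt_succ_self _) hmem
          have h2 := (T_le_card hT hmem).2
          simp only [Prod.mk.eta] at h1
          omega
      have key : ∀ (T : ℕ × ℕ → ℕ), IsSYTD μ T → ∀ c : ℕ × ℕ,
          c ∈ μ → T c = μ.card → IsRemovable μ c →
          IsSYTD (eraseY μ c) (Function.update T c 0) := by
        intro T hT c hc hTc hrem
        have hmemE : ∀ x, x ∈ eraseY μ c ↔ x ∈ μ ∧ x ≠ c := mem_eraseY hrem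
        have hcardE : (eraseY μ c).card = μ.card - 1 := card_eraseY hrem
        have hupd : ∀ p, p ≠ c → Function.update T c 0 p = T p :=
          fun p hp => Function.update_of_ne hp 0 T
        refine ⟨?_, ⟨?_, ?_, ?_⟩, ?_, ?_⟩
        · intro p hp
          by_cases hpc : p = c
          · rw [hpc, Function.update_self]
          · rw [hupd p hpc]
            apply hT.1
            intro hpm
            exact hp ((hmemE p).mpr ⟨hpm, hpc⟩)
        · intro p hp
          simp only [Finset.mem_coe, YoungDiagram.mem_cells] at hp
          rw [hmemE p] at hp
          obtain ⟨hpm, hpc⟩ := hp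
          rw [hupd p hpc]
          have h1 := T_le_card hT hpm
          have hne : T p ≠ μ.card := by
            intro h
            exact hpc (hT.2.1.2.1 (by simpa using hpm) (by simpa using hc) (by rw [h, hTc]))
          rw [Set.mem_Icc, hcardE]
          omega
        · intro p hp q hq hpq
          simp only [Finset.mem_coe, YoungDiagram.mem_cells] at hp hq
          rw [hmemE p] at hp
          rw [hmemE q] at hq
          rw [hupd p hp.2, hupd q hq.2] at hpq
          exact hT.2.1.2.1 (by simpa using hp.1) (by simpa using hq.1) hpq
        · intro v hv
          rw [Set.mem_Icc, hcardE] at hv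
          have hv' : v ∈ Set.Icc 1 μ.card := Set.mem_Icc.mpr ⟨hv.1, by omega⟩
          obtain ⟨p, hp, hTp⟩ := hT.2.1.2.2 hv'
          simp only [Finset.mem_coe, YoungDiagram.mem_cells] at hp
          have hpc : p ≠ c := by
            intro h
            rw [h, hTc] at hTp
            omega
          refine ⟨p, ?_, ?_⟩
          · simp only [Finset.mem_coe, YoungDiagram.mem_cells]
            exact (hmemE p).mpr ⟨hp, hpc⟩
          · rw [hupd p hpc, hTp]
        · intro i j j' hjj hmem
          rw [hmemE _] at hmem
          have hjc : (i, j) ≠ c := by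
            intro h
            apply hrem.2.2
            rw [← h]
            exact μ.up_left_mem le_rfl (by omega) hmem.1
          rw [hupd _ hjc, hupd _ hmem.2]
          exact hT.2.2.1 i j j' hjj hmem.1
        · intro i i' j hii hmem
          rw [hmemE _] at hmem
          have hjc : (i, j) ≠ c := by
            intro h
            apply hrem.2.1
            rw [← h]
            exact μ.up_left_mem (by omega) le_rfl hmem.1
          rw [hupd _ hjc, hupd _ hmem.2]
          exact hT.2.2.2 i i' j hii hmem.1
      classical
      let Φ : {T : ℕ × ℕ → ℕ // IsSYTD μ T} →
          Σ c : ↥(removables μ), {T' : ℕ × ℕ → ℕ // IsSYTD (eraseY μ ↑c) T'} := fun T =>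
        ⟨⟨(topcell T).choose, mem_removables.mpr
            (toprem T.1 T.2 _ (topcell T).choose_spec.1 (topcell T).choose_spec.2)⟩,
          ⟨Function.update T.1 (topcell T).choose 0,
            key T.1 T.2 _ (topcell T).choose_spec.1 (topcell T).choose_spec.2
              (toprem T.1 T.2 _ (topcell T).choose_spec.1 (topcell T).choose_spec.2)⟩⟩
      let Ψ : (Σ c : ↥(removables μ), {T' : ℕ × ℕ → ℕ // IsSYTD (eraseY μ ↑c) T'}) →
          (ℕ × ℕ → ℕ) := fun x => Function.update x.2.1 x.1.1 μ.card
      have hΨΦ : ∀ T, Ψ (Φ T) = T.1 := by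
        intro T
        funext p
        simp only [Φ, Ψ]
        by_cases hpc : p = (topcell T).choose
        · rw [hpc, Function.update_self]
          exact ((topcell T).choose_spec.2).symm
        · rw [Function.update_of_ne hpc, Function.update_of_ne hpc]
      have hΦ : Function.Injective Φ := by
        intro T₁ T₂ h
        apply Subtype.ext
        rw [← hΨΦ T₁, ← hΨΦ T₂, h]
      calc Nat.card {T : ℕ × ℕ → ℕ // IsSYTD μ T}
          ≤ Nat.card (Σ c : ↥(removables μ), {T' : ℕ × ℕ → ℕ // IsSYTD (eraseY μ ↑c) T'}) :=
            Nat.card_le_card_of_injective Φ hΦ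
        _ = ∑ c : ↥(removables μ), Nat.card {T' : ℕ × ℕ → ℕ // IsSYTD (eraseY μ ↑c) T'} :=
            nat_card_sigma _
        _ ≤ ∑ c : ↥(removables μ), fY (eraseY μ ↑c) := by
            apply Finset.sum_le_sum
            intro c _
            apply IH ((eraseY μ ↑c).card) ?_ _ rfl
            rw [card_eraseY (mem_removables.mp c.2), hcard]
            omega
        _ = ∑ c ∈ removables μ, fY (eraseY μ c) :=
            Finset.sum_coe_sort (removables μ) (fun c => fY (eraseY μ c))
        _ = fY μ := (fY_spec hbot).symm

end SytAux

namespace SytAux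

theorem list_sum_eq (L : List ℕ) : L.sum = ∑ i ∈ Finset.range L.length, L.getD i 0 := by
  induction L with
  | nil => simp
  | cons a t ih =>
    rw [List.sum_cons, List.length_cons, Finset.sum_range_succ', ih]
    simp [List.getD]
    ring

theorem card_eq_sum_rowLens (μ : YoungDiagram) {N : ℕ} (hN : μ.colLen 0 ≤ N) :
    μ.card = ∑ i ∈ Finset.range N, μ.rowLen i := by
  classical
  have hcells : μ.cells = (Finset.range N).biUnion (fun i => μ.row i) := by
    ext c
    simp only [Finset.mem_biUnion, Finset.mem_range]
    constructor
    · intro hc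
      refine ⟨c.1, ?_, ?_⟩
      · have h1 : (c.1, 0) ∈ μ := μ.up_left_mem le_rfl (Nat.zero_le _) (by simpa using hc)
        have := YoungDiagram.mem_iff_lt_colLen.mp h1
        omega
      · rw [YoungDiagram.mem_row_iff]
        exact ⟨hc, rfl⟩
    · rintro ⟨i, _, hc⟩
      rw [YoungDiagram.mem_row_iff] at hc
      exact hc.1
  rw [YoungDiagram.card, hcells, Finset.card_biUnion]
  · exact Finset.sum_congr rfl (fun i _ => (μ.rowLen_eq_card).symm)
  · intro i _ j _ hij
    simp only [Finset.disjoint_left]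
    intro c hc hc'
    rw [YoungDiagram.mem_row_iff] at hc hc'
    exact hij (hc.2 ▸ hc'.2)

theorem mem_ofRowLens_getD {L : List ℕ} {hw : L.SortedGE} {c : ℕ × ℕ} :
    c ∈ YoungDiagram.ofRowLens L hw ↔ c.2 < L.getD c.1 0 := by
  rw [YoungDiagram.mem_ofRowLens]
  constructor
  · rintro ⟨h, hc⟩
    rwa [List.getD_eq_getElem L 0 h]
  · intro hc
    have h : c.1 < L.length := by
      by_contra h
      rw [List.getD_eq_default L 0 (by omega)] at hc
      omega
    exact ⟨h, by rwa [← List.getD_eq_getElem L 0 h]⟩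

theorem card_ofRowLens {L : List ℕ} {hw : L.SortedGE} :
    (YoungDiagram.ofRowLens L hw).card = L.sum := by
  rw [card_eq_sum_rowLens (YoungDiagram.ofRowLens L hw) (N := L.length), list_sum_eq]
  · apply Finset.sum_congr rfl
    intro i hi
    rw [Finset.mem_range] at hi
    have h1 : (YoungDiagram.ofRowLens L hw).rowLen i = L.get ⟨i, hi⟩ :=
      YoungDiagram.rowLen_ofRowLens ⟨i, hi⟩
    rw [h1, List.getD_eq_getElem L 0 hi]
    rfl
  · by_contra h
    push_neg at h
    have : (L.length, 0) ∈ YoungDiagram.ofRowLens L hw :=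
      YoungDiagram.mem_iff_lt_colLen.mpr h
    rw [mem_ofRowLens_getD, List.getD_eq_default L 0 le_rfl] at this
    omega

end SytAux

namespace SytAux

theorem isSYT_iff_isSYTD {L : List ℕ} (hw : L.Pairwise (· ≥ ·)) (T : ℕ × ℕ → ℕ) :
    IsSYT L T ↔ IsSYTD (YoungDiagram.ofRowLens L hw.sortedGE) T := by
  have hmem : ∀ p : ℕ × ℕ, p ∈ YoungDiagram.ofRowLens L hw.sortedGE ↔ p.2 < L.getD p.1 0 :=
    fun p => mem_ofRowLens_getD
  have hset : (↑(YoungDiagram.ofRowLens L hw.sortedGE).cells : Set (ℕ × ℕ))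
      = {p : ℕ × ℕ | p.2 < L.getD p.1 0} := by
    ext p
    simp only [Finset.mem_coe, YoungDiagram.mem_cells, Set.mem_setOf_eq, hmem]
  have hcard : (YoungDiagram.ofRowLens L hw.sortedGE).card = L.sum := card_ofRowLens
  unfold IsSYT IsSYTD
  rw [hset, hcard]
  constructor
  · rintro ⟨h1, h2, h3, h4⟩
    exact ⟨fun p hp => h1 p (fun hlt => hp ((hmem p).mpr hlt)), h2,
      fun i j j' hjj hmem' => h3 i j j' hjj ((hmem _).mp hmem'),
      fun i i' j hii hmem' => h4 i i' j hii ((hmem _).mp hmem')⟩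
  · rintro ⟨h1, h2, h3, h4⟩
    exact ⟨fun p hp => h1 p (fun hm => hp ((hmem p).mp hm)), h2,
      fun i j j' hjj hlt => h3 i j j' hjj ((hmem _).mpr hlt),
      fun i i' j hii hlt => h4 i i' j hii ((hmem _).mpr hlt)⟩

theorem sytCount_eq_card_sytd {L : List ℕ} (hw : L.Pairwise (· ≥ ·)) :
    sytCount L = Nat.card {T : ℕ × ℕ → ℕ // IsSYTD (YoungDiagram.ofRowLens L hw.sortedGE) T} := by
  unfold sytCount
  exact Nat.card_congr (Equiv.subtypeEquivRight (fun T => isSYT_iff_isSYTD hw T))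

theorem sytFinite (L : List ℕ) (hw : L.Pairwise (· ≥ ·)) :
    Finite {T : ℕ × ℕ → ℕ // IsSYT L T} :=
  Finite.of_equiv _ (Equiv.subtypeEquivRight (fun T => (isSYT_iff_isSYTD hw T))).symm

/-- The squared count of SYT of a partition list of `d` is at most `d!`. -/
theorem sytCount_sq_le {M : List ℕ} (hw : M.Pairwise (· ≥ ·)) {d : ℕ} (hsum : M.sum = d) :
    sytCount M * sytCount M ≤ Nat.factorial d := by
  rw [sytCount_eq_card_sytd hw]
  have h1 := card_sytd_le_fY (YoungDiagram.ofRowLens M hw.sortedGE).card (YoungDiagram.ofRowLens M hw.sortedGE) rfl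
  calc Nat.card {T : ℕ × ℕ → ℕ // IsSYTD (YoungDiagram.ofRowLens M hw.sortedGE) T} *
        Nat.card {T : ℕ × ℕ → ℕ // IsSYTD (YoungDiagram.ofRowLens M hw.sortedGE) T}
      ≤ fY (YoungDiagram.ofRowLens M hw.sortedGE) * fY (YoungDiagram.ofRowLens M hw.sortedGE) :=
        Nat.mul_le_mul h1 h1
    _ ≤ Nat.factorial (YoungDiagram.ofRowLens M hw.sortedGE).card := fY_sq_le _
    _ = Nat.factorial d := by rw [card_ofRowLens, hsum]

end SytAux

namespace SytAux

open Classical in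
/-- Rank of `v` in the finite set `S`. -/
noncomputable def rk (S : Finset ℕ) (v : ℕ) : ℕ := (S.filter (· ≤ v)).card

theorem rk_mem {S : Finset ℕ} {v : ℕ} (hv : v ∈ S) : 1 ≤ rk S v ∧ rk S v ≤ S.card := by
  classical
  constructor
  · rw [rk, Nat.one_le_iff_ne_zero, ← Nat.pos_iff_ne_zero, Finset.card_pos]
    exact ⟨v, Finset.mem_filter.mpr ⟨hv, le_rfl⟩⟩
  · exact Finset.card_le_card (Finset.filter_subset _ _)

theorem rk_lt {S : Finset ℕ} {v w : ℕ} (hw : w ∈ S) (hvw : v < w) :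
    rk S v < rk S w := by
  classical
  apply Finset.card_lt_card
  rw [Finset.ssubset_iff_of_subset]
  · exact ⟨w, Finset.mem_filter.mpr ⟨hw, le_rfl⟩, fun hc => by
      have := (Finset.mem_filter.mp hc).2
      omega⟩
  · intro x hx
    rw [Finset.mem_filter] at hx ⊢
    exact ⟨hx.1, by omega⟩

theorem rk_inj {S : Finset ℕ} {v w : ℕ} (hv : v ∈ S) (hw : w ∈ S)
    (h : rk S v = rk S w) : v = w := by
  rcases lt_trichotomy v w with hlt | heq | hgt
  · exact absurd h (Nat.ne_of_lt (rk_lt hw hlt))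
  · exact heq
  · exact absurd h.symm (Nat.ne_of_lt (rk_lt hv hgt))

theorem rk_surj {S : Finset ℕ} {k : ℕ} (h1 : 1 ≤ k) (h2 : k ≤ S.card) :
    ∃ v ∈ S, rk S v = k := by
  classical
  have := Finset.surj_on_of_inj_on_of_card_le (s := S) (t := Finset.Icc 1 S.card)
    (fun v _ => rk S v) (fun v hv => Finset.mem_Icc.mpr (rk_mem hv))
    (fun v w hv hw h => rk_inj hv hw h) (by rw [Nat.card_Icc]; omega)
  obtain ⟨v, hv, hrk⟩ := this k (Finset.mem_Icc.mpr ⟨h1, h2⟩)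
  exact ⟨v, hv, hrk.symm⟩

end SytAux

namespace SytAux

theorem strip {L : List ℕ} {n d : ℕ} (hsort : L.Pairwise (· ≥ ·)) (hpos : ∀ x ∈ L, 0 < x)
    (hsum : L.sum = n) (hdn : d ≤ n) (hhead : L.headD 0 = n - d) :
    sytCount L ≤ Nat.choose n d * sytCount L.tail := by
  classical
  set M := L.tail with hM
  have hMsort : M.Pairwise (· ≥ ·) := hsort.tail
  have hgetD : ∀ i : ℕ, M.getD i 0 = L.getD (i+1) 0 := by
    intro i
    cases L with
    | nil => simp [hM]
    | cons a t => simp [hM]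
  have hhead0 : L.getD 0 0 = n - d := by
    cases L with
    | nil => simpa using hhead
    | cons a t => simpa using hhead
  have hMsum : M.sum = d := by
    cases L with
    | nil =>
      have : n = 0 := by simpa using hsum.symm
      simp [hM]
      omega
    | cons a t =>
      simp only [List.sum_cons] at hsum
      have ha : a = n - d := by simpa using hhead
      simp only [hM, List.tail_cons]
      omega
  set μM := YoungDiagram.ofRowLens M hMsort.sortedGE with hμM
  set tcells := μM.cells with htcells
  have hdom : ∀ p : ℕ × ℕ, p ∈ tcells ↔ p.2 < M.getD p.1 0 := by
    intro p
    rw [htcells, YoungDiagram.mem_cells, hμM]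
    exact mem_ofRowLens_getD
  have htcard : tcells.card = d := by
    rw [htcells, hμM]
    change (YoungDiagram.ofRowLens M hMsort.sortedGE).card = d
    rw [card_ofRowLens, hMsum]
  -- the data extracted from a tableau
  set Smap : (ℕ × ℕ → ℕ) → Finset ℕ := fun T => tcells.image (fun p => T (p.1+1, p.2))
    with hSmap
  set Tmap : (ℕ × ℕ → ℕ) → (ℕ × ℕ → ℕ) :=
    fun T p => if p.2 < M.getD p.1 0 then rk (Smap T) (T (p.1+1, p.2)) else 0 with hTmap
  have hTval : ∀ (T : ℕ × ℕ → ℕ), IsSYT L T → ∀ p : ℕ × ℕ,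
      p.2 < L.getD p.1 0 → 1 ≤ T p ∧ T p ≤ n := by
    intro T hT p hp
    have := hT.2.1.1 hp
    rw [Set.mem_Icc, hsum] at this
    exact this
  have hTinj : ∀ (T : ℕ × ℕ → ℕ), IsSYT L T → ∀ p q : ℕ × ℕ,
      p.2 < L.getD p.1 0 → q.2 < L.getD q.1 0 → T p = T q → p = q := by
    intro T hT p q hp hq h
    exact hT.2.1.2.1 hp hq h
  have hshift : ∀ p : ℕ × ℕ, p ∈ tcells → (p.1+1, p.2).2 < L.getD (p.1+1, p.2).1 0 := by
    intro p hp
    rw [hdom p] at hp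
    rw [← hgetD p.1]
    exact hp
  have hSval : ∀ (T : ℕ × ℕ → ℕ), IsSYT L T → ∀ v ∈ Smap T, 1 ≤ v ∧ v ≤ n := by
    intro T hT v hv
    rw [hSmap] at hv
    obtain ⟨p, hp, rfl⟩ := Finset.mem_image.mp hv
    exact hTval T hT _ (hshift p hp)
  have hSsub : ∀ (T : ℕ × ℕ → ℕ), IsSYT L T → Smap T ⊆ Finset.Icc 1 n := by
    intro T hT v hv
    rw [Finset.mem_Icc]
    exact hSval T hT v hv
  have hScard : ∀ (T : ℕ × ℕ → ℕ), IsSYT L T → (Smap T).card = d := by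
    intro T hT
    rw [hSmap]
    rw [Finset.card_image_of_injOn, htcard]
    intro p hp q hq h
    have := hTinj T hT _ _ (hshift p (by simpa using hp)) (hshift q (by simpa using hq)) h
    rw [Prod.ext_iff] at this ⊢
    simp only at this
    exact ⟨by omega, this.2⟩
  have hT'SYT : ∀ (T : ℕ × ℕ → ℕ), IsSYT L T → IsSYT M (Tmap T) := by
    intro T hT
    refine ⟨?_, ⟨?_, ?_, ?_⟩, ?_, ?_⟩
    · intro p hp
      rw [hTmap]
      exact if_neg hp
    · intro p hp
      rw [Set.mem_setOf_eq] at hp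
      have hpt : p ∈ tcells := (hdom p).mpr hp
      have hmem : T (p.1+1, p.2) ∈ Smap T := Finset.mem_image_of_mem _ hpt
      have h1 := rk_mem hmem
      rw [hScard T hT] at h1
      simp only [hTmap, if_pos hp]
      rw [Set.mem_Icc, hMsum]
      exact h1
    · intro p hp q hq h
      rw [Set.mem_setOf_eq] at hp hq
      have hpt : p ∈ tcells := (hdom p).mpr hp
      have hqt : q ∈ tcells := (hdom q).mpr hq
      simp only [hTmap, if_pos hp, if_pos hq] at h
      have h2 := rk_inj (Finset.mem_image_of_mem _ hpt) (Finset.mem_image_of_mem _ hqt) h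
      have := hTinj T hT _ _ (hshift p hpt) (hshift q hqt) h2
      rw [Prod.ext_iff] at this ⊢
      simp only at this
      exact ⟨by omega, this.2⟩
    · intro v hv
      rw [Set.mem_Icc, hMsum] at hv
      have hcard : v ≤ (Smap T).card := by rw [hScard T hT]; exact hv.2
      obtain ⟨s, hs, hrk⟩ := rk_surj hv.1 hcard
      obtain ⟨p, hp, rfl⟩ := Finset.mem_image.mp hs
      refine ⟨p, ?_, ?_⟩
      · rw [Set.mem_setOf_eq]
        exact (hdom p).mp hp
      · simp only [hTmap, if_pos ((hdom p).mp hp)]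
        exact hrk
    · intro i j j' hjj hj'
      have hj : j < M.getD i 0 := lt_trans hjj hj'
      simp only [hTmap, if_pos hj, if_pos hj']
      apply rk_lt (Finset.mem_image_of_mem _ ((hdom (i, j')).mpr hj'))
      apply hT.2.2.1 (i+1) j j' hjj
      rw [← hgetD i]
      exact hj'
    · intro i i' j hii hj
      have hj2 : j < M.getD i 0 := by
        have h1 : (i', j) ∈ tcells := (hdom (i', j)).mpr hj
        have h2 : (i, j) ∈ tcells := by
          rw [htcells, YoungDiagram.mem_cells] at h1 ⊢
          exact μM.up_left_mem (le_of_lt hii) le_rfl h1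
        exact (hdom (i, j)).mp h2
      simp only [hTmap, if_pos hj2, if_pos hj]
      apply rk_lt (Finset.mem_image_of_mem _ ((hdom (i', j)).mpr hj))
      apply hT.2.2.2 (i+1) (i'+1) j (by omega)
      rw [← hgetD i']
      exact hj
  -- injectivity
  have hInj : ∀ (T₁ T₂ : ℕ × ℕ → ℕ), IsSYT L T₁ → IsSYT L T₂ →
      Smap T₁ = Smap T₂ → Tmap T₁ = Tmap T₂ → T₁ = T₂ := by
    intro T₁ T₂ hT₁ hT₂ hS hT'
    funext p
    obtain ⟨i, j⟩ := p
    by_cases hp : j < L.getD i 0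
    · cases i with
      | zero =>
        -- first row: both are the increasing enumeration of the complement
        have hj : j < n - d := by rwa [hhead0] at hp
        set s : Finset ℕ := Finset.Icc 1 n \ Smap T₁ with hs
        have hscard : s.card = n - d := by
          rw [hs, Finset.card_sdiff_of_subset (hSsub T₁ hT₁), Nat.card_Icc, hScard T₁ hT₁]
          omega
        have notmem : ∀ (T : ℕ × ℕ → ℕ), IsSYT L T → ∀ k : ℕ, k < n - d →
            T (0, k) ∉ Smap T := by
          intro T hT k hk hmem
          obtain ⟨q, hq, hval⟩ := Finset.mem_image.mp hmem
          have := hTinj T hT _ _ (hshift q hq) (by rw [hhead0]; exact hk) hval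
          simp [Prod.ext_iff] at this
        have hfs₁ : ∀ k : Fin (n - d), T₁ (0, ↑k) ∈ s := by
          intro k
          rw [hs, Finset.mem_sdiff, Finset.mem_Icc]
          exact ⟨hTval T₁ hT₁ (0, ↑k) (by rw [hhead0]; exact k.2), notmem T₁ hT₁ ↑k k.2⟩
        have hfs₂ : ∀ k : Fin (n - d), T₂ (0, ↑k) ∈ s := by
          intro k
          rw [hs, Finset.mem_sdiff, Finset.mem_Icc, hS]
          exact ⟨hTval T₂ hT₂ (0, ↑k) (by rw [hhead0]; exact k.2), notmem T₂ hT₂ ↑k k.2⟩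
        have hmono₁ : StrictMono (fun k : Fin (n - d) => T₁ (0, ↑k)) := by
          intro a b hab
          exact hT₁.2.2.1 0 ↑a ↑b hab (by rw [hhead0]; exact b.2)
        have hmono₂ : StrictMono (fun k : Fin (n - d) => T₂ (0, ↑k)) := by
          intro a b hab
          exact hT₂.2.2.1 0 ↑a ↑b hab (by rw [hhead0]; exact b.2)
        have he : (fun k : Fin (n - d) => T₁ (0, ↑k)) = (fun k : Fin (n - d) => T₂ (0, ↑k)) := by
          rw [Finset.orderEmbOfFin_unique hscard hfs₁ hmono₁,
            Finset.orderEmbOfFin_unique hscard hfs₂ hmono₂]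
        exact congrFun he ⟨j, hj⟩
      | succ i' =>
        have hjM : j < M.getD i' 0 := by rw [hgetD i']; exact hp
        have hmem : (i', j) ∈ tcells := (hdom (i', j)).mpr hjM
        have e1 := congrFun hT' (i', j)
        simp only [hTmap, if_pos hjM] at e1
        rw [← hS] at e1
        have m2 : T₂ (i' + 1, j) ∈ Smap T₁ := by
          rw [hS]
          exact Finset.mem_image_of_mem (fun p : ℕ × ℕ => T₂ (p.1 + 1, p.2)) hmem
        exact rk_inj (Finset.mem_image_of_mem (fun p : ℕ × ℕ => T₁ (p.1 + 1, p.2)) hmem) m2 e1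
    · rw [hT₁.1 (i, j) hp, hT₂.1 (i, j) hp]
  -- the injection into the product, and counting
  haveI : Finite {T : ℕ × ℕ → ℕ // IsSYT M T} := sytFinite M hMsort
  haveI : Finite {T : ℕ × ℕ → ℕ // IsSYT L T} := sytFinite L hsort
  set Q := {x : Finset ℕ // x ∈ Finset.powersetCard d (Finset.Icc 1 n)} ×
    {T' : ℕ × ℕ → ℕ // IsSYT M T'} with hQ
  have main : sytCount L ≤ Nat.card Q := by
    apply Nat.card_le_card_of_injective
      (fun T : {T : ℕ × ℕ → ℕ // IsSYT L T} =>
        ((⟨Smap T.1, Finset.mem_powersetCard.mpr ⟨hSsub T.1 T.2, hScard T.1 T.2⟩⟩,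
          ⟨Tmap T.1, hT'SYT T.1 T.2⟩) : Q))
    intro T₁ T₂ h
    rw [Prod.ext_iff] at h
    obtain ⟨h1, h2⟩ := h
    rw [Subtype.ext_iff] at h1 h2
    exact Subtype.ext (hInj T₁.1 T₂.1 T₁.2 T₂.2 h1 h2)
  have hQcard : Nat.card Q = Nat.choose n d * sytCount M := by
    rw [hQ, Nat.card_prod]
    have h1 : Nat.card {x : Finset ℕ // x ∈ Finset.powersetCard d (Finset.Icc 1 n)}
        = Nat.choose n d := by
      have h := Nat.card_eq_finsetCard (Finset.powersetCard d (Finset.Icc 1 n))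
      rw [Finset.card_powersetCard, Nat.card_Icc] at h
      rw [h]
      congr 1
    have h2 : Nat.card {T' : ℕ × ℕ → ℕ // IsSYT M T'} = sytCount M := rfl
    rw [h1, h2]
  rw [← hQcard]
  exact main

end SytAux

theorem syt_dim_upper_bound (n d : ℕ) (hdn : d ≤ n)
    (L : List ℕ) (hL : IsPartitionList L n) (h1 : L.headD 0 = n - d) :
    (sytCount L : ℝ) ≤ (n : ℝ) ^ d / Real.sqrt (Nat.factorial d) := by
  obtain ⟨hsort, hpos, hsum⟩ := hL
  have hMsort : L.tail.Pairwise (· ≥ ·) := hsort.tail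
  have hMsum : L.tail.sum = d := by
    cases L with
    | nil =>
      have : n = 0 := by simpa using hsum.symm
      simp
      omega
    | cons a t =>
      simp only [List.sum_cons] at hsum
      have ha : a = n - d := by simpa using h1
      simp only [List.tail_cons]
      omega
  have hstrip := SytAux.strip hsort hpos hsum hdn h1
  have hsq := SytAux.sytCount_sq_le hMsort hMsum
  have hfacpos : (0 : ℝ) < (Nat.factorial d : ℝ) := by
    exact_mod_cast Nat.factorial_pos d
  have hsqrtpos : 0 < Real.sqrt (Nat.factorial d) := Real.sqrt_pos.mpr hfacpos
  have h2 : (sytCount L.tail : ℝ) ≤ Real.sqrt (Nat.factorial d) := by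
    have hcast : (sytCount L.tail : ℝ) * (sytCount L.tail : ℝ) ≤ (Nat.factorial d : ℝ) := by
      exact_mod_cast hsq
    calc (sytCount L.tail : ℝ)
        = Real.sqrt ((sytCount L.tail : ℝ) * (sytCount L.tail : ℝ)) :=
          (Real.sqrt_mul_self (by positivity)).symm
      _ ≤ Real.sqrt (Nat.factorial d) := Real.sqrt_le_sqrt hcast
  have h3 : ((n.choose d : ℕ) : ℝ) ≤ (n : ℝ) ^ d / (Nat.factorial d : ℝ) := by
    have := Nat.choose_le_pow_div (α := ℝ) d n
    exact_mod_cast this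
  calc (sytCount L : ℝ)
      ≤ ((n.choose d : ℕ) : ℝ) * (sytCount L.tail : ℝ) := by exact_mod_cast hstrip
    _ ≤ ((n : ℝ) ^ d / (Nat.factorial d : ℝ)) * Real.sqrt (Nat.factorial d) := by
        apply mul_le_mul h3 h2 (by positivity) (by positivity)
    _ = (n : ℝ) ^ d / Real.sqrt (Nat.factorial d) := by
        rw [div_mul_eq_mul_div, div_eq_div_iff hfacpos.ne' hsqrtpos.ne',
          mul_assoc, Real.mul_self_sqrt hfacpos.le]
end

section
/- For positive integers $d$ and $r$ with $r > d$, let $F_{r,d}$ denote the event that a uniformly random permutation of $\{1,\dots,r\}$ has all its cycles of length strictly greater than $d$. Then $\Pr[F_{r,d}] \ge \frac{1}{10d}$. -/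
/-- The probability that a uniformly random permutation of `{1, …, r}` has all its
cycles (including fixed points) of length strictly greater than `d`.  Since
`Equiv.Perm.cycleType` lists only the nontrivial cycle lengths, this event is
`σ.cycleType.sum = r` (no fixed points) together with all entries of the cycle
type exceeding `d`. -/
noncomputable def probAllCyclesLong (d r : ℕ) : ℝ :=
  (Nat.card {σ : Equiv.Perm (Fin r) //
      σ.cycleType.sum = r ∧ ∀ k ∈ σ.cycleType, d < k} : ℝ) / (Nat.factorial r : ℝ)

open Equiv Equiv.Perm Finset
namespace ProbLong
variable {r : ℕ} [NeZero r]

def theList {k : ℕ} (w : Fin (k-1) ↪ {x : Fin r // x ≠ 0}) : List (Fin r) :=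
  0 :: List.ofFn (fun i => (w i : Fin r))

theorem theList_nodup {k : ℕ} (w : Fin (k-1) ↪ {x : Fin r // x ≠ 0}) :
    (theList w).Nodup := by
  rw [theList, List.nodup_cons]
  refine ⟨?_, ?_⟩
  · simp only [List.mem_ofFn]
    rintro ⟨i, hi⟩
    exact (w i).2 hi
  · rw [List.nodup_ofFn]
    intro i j hij
    exact w.injective (Subtype.ext hij)

theorem theList_length {k : ℕ} (hk : 1 ≤ k) (w : Fin (k-1) ↪ {x : Fin r // x ≠ 0}) :
    (theList w).length = k := by
  simp [theList]; omega

theorem compl_card {k : ℕ} (hk : 1 ≤ k) (w : Fin (k-1) ↪ {x : Fin r // x ≠ 0}) :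
    ((theList w).toFinset)ᶜ.card = r - k := by
  rw [Finset.card_compl, List.card_toFinset, (theList_nodup w).dedup,
    theList_length hk w, Fintype.card_fin]

noncomputable def theEquiv {k : ℕ} (hk : 1 ≤ k)
    (w : Fin (k-1) ↪ {x : Fin r // x ≠ 0}) :
    Fin (r - k) ≃ {x : Fin r // x ∈ ((theList w).toFinset)ᶜ} :=
  (((theList w).toFinset)ᶜ.orderIsoOfFin (compl_card hk w)).toEquiv

noncomputable def buildPerm {k : ℕ} (hk : 1 ≤ k)
    (w : Fin (k-1) ↪ {x : Fin r // x ≠ 0}) (τ : Perm (Fin (r - k))) : Perm (Fin r) :=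
  (theList w).formPerm * τ.extendDomain (theEquiv hk w)

theorem support_formPerm_theList {k : ℕ} (hk : 2 ≤ k) (w : Fin (k-1) ↪ {x : Fin r // x ≠ 0}) :
    (theList w).formPerm.support = (theList w).toFinset := by
  apply List.support_formPerm_of_nodup _ (theList_nodup w)
  intro x hx
  have h := theList_length (by omega : 1 ≤ k) w
  rw [hx, List.length_singleton] at h
  omega

theorem disjoint_parts {k : ℕ} (hk : 2 ≤ k)
    (w : Fin (k-1) ↪ {x : Fin r // x ≠ 0}) (τ : Perm (Fin (r - k))) :
    Disjoint (theList w).formPerm (τ.extendDomain (theEquiv (by omega : 1 ≤ k) w)) := by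
  rw [disjoint_iff_disjoint_support, support_formPerm_theList hk w]
  refine Finset.disjoint_left.mpr fun x hx hx' => ?_
  rw [support_extend_domain] at hx'
  simp only [Finset.mem_map] at hx'
  obtain ⟨a, _, ha⟩ := hx'
  have : x ∈ ((theList w).toFinset)ᶜ := by
    rw [← ha]; exact (theEquiv (show (1:ℕ) ≤ k by omega) w a).2
  simp only [Finset.mem_compl] at this
  exact this hx

theorem cycleType_buildPerm {k : ℕ} (hk : 2 ≤ k)
    (w : Fin (k-1) ↪ {x : Fin r // x ≠ 0}) (τ : Perm (Fin (r - k))) :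
    (buildPerm (by omega) w τ).cycleType = k ::ₘ τ.cycleType := by
  rw [buildPerm, Equiv.Perm.Disjoint.cycleType_mul (disjoint_parts hk w τ),
    (List.isCycle_formPerm (theList_nodup w) (by rw [theList_length (by omega) w]; omega)).cycleType,
    cycleType_extendDomain]
  rw [support_formPerm_theList hk w, List.card_toFinset, (theList_nodup w).dedup,
    theList_length (by omega) w]
  rfl


theorem extendDomain_apply_zero {k : ℕ} (hk : 2 ≤ k)
    (w : Fin (k-1) ↪ {x : Fin r // x ≠ 0}) (τ : Perm (Fin (r - k))) :
    τ.extendDomain (theEquiv (by omega : 1 ≤ k) w) 0 = 0 := by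
  apply Perm.extendDomain_apply_not_subtype
  simp only [Finset.mem_compl, not_not]
  rw [List.mem_toFinset]
  exact List.mem_cons_self

theorem buildPerm_pow_apply_zero {k : ℕ} (hk : 2 ≤ k)
    (w : Fin (k-1) ↪ {x : Fin r // x ≠ 0}) (τ : Perm (Fin (r - k))) (j : ℕ) :
    ((buildPerm (by omega : 1 ≤ k) w τ) ^ j) 0 =
      (theList w)[j % k]'(by rw [theList_length (by omega) w]; exact Nat.mod_lt _ (by omega)) := by
  rw [buildPerm, ((disjoint_parts hk w τ).commute).mul_pow, Equiv.Perm.mul_apply,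
    pow_apply_eq_self_of_apply_eq_self (extendDomain_apply_zero hk w τ)]
  have h0 : (0 : Fin r) = (theList w)[0]'(by rw [theList_length (by omega) w]; omega) := rfl
  rw [h0, List.formPerm_pow_apply_getElem _ (theList_nodup w) j 0 _]
  simp only [Nat.zero_add]
  congr 1
  rw [theList_length (by omega) w]


abbrev IsGood (d : ℕ) {n : ℕ} (σ : Perm (Fin n)) : Prop :=
  σ.cycleType.sum = n ∧ ∀ k ∈ σ.cycleType, d < k

theorem isGood_buildPerm {d k : ℕ} (hd : 1 ≤ d) (hk : d + 1 ≤ k) (hkr : k ≤ r)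
    (w : Fin (k-1) ↪ {x : Fin r // x ≠ 0}) (τ : Perm (Fin (r - k))) (hτ : IsGood d τ) :
    IsGood d (buildPerm (by omega : 1 ≤ k) w τ) := by
  have h2 : 2 ≤ k := by omega
  constructor
  · rw [cycleType_buildPerm h2 w τ, Multiset.sum_cons, hτ.1]; omega
  · intro m hm
    rw [cycleType_buildPerm h2 w τ, Multiset.mem_cons] at hm
    rcases hm with rfl | hm
    · omega
    · exact hτ.2 m hm

noncomputable def F (d r : ℕ) [NeZero r] (hd : 1 ≤ d) :
    (Σ k : (Finset.Icc (d+1) r), (Fin ((k:ℕ)-1) ↪ {x : Fin r // x ≠ 0}) ×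
      {τ : Perm (Fin (r-(k:ℕ))) // IsGood d τ}) → {σ : Perm (Fin r) // IsGood d σ} :=
  fun x => ⟨buildPerm (by have := (Finset.mem_Icc.mp x.1.2).1; omega : 1 ≤ (x.1:ℕ))
      x.2.1 x.2.2.1,
    isGood_buildPerm hd (Finset.mem_Icc.mp x.1.2).1 (Finset.mem_Icc.mp x.1.2).2
      x.2.1 x.2.2.1 x.2.2.2⟩

theorem theList_getElem_succ {k : ℕ} (w : Fin (k-1) ↪ {x : Fin r // x ≠ 0})
    (j : ℕ) (hj : j + 1 < (theList w).length) :
    (theList w)[j+1] = (w ⟨j, by simpa [theList] using hj⟩ : Fin r) := by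
  simp [theList]

theorem getElem_idx_congr {α : Type*} (l : List α) {i j : ℕ} (h : i = j) (hi : i < l.length) :
    l[i] = l[j]'(h ▸ hi) := by subst h; rfl

theorem theList_getElem_eq_zero_iff {k : ℕ} (w : Fin (k-1) ↪ {x : Fin r // x ≠ 0})
    {i : ℕ} (h : i < (theList w).length) : (theList w)[i] = 0 ↔ i = 0 := by
  have h0 : (0 : Fin r) = (theList w)[0]'(by simp [theList]) := rfl
  rw [h0, List.Nodup.getElem_inj_iff (theList_nodup w)]

theorem F_injective (d : ℕ) (hd : 1 ≤ d) : Function.Injective (F d r hd) := by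
  rintro ⟨k, w, τ, hτ⟩ ⟨k', w', τ', hτ'⟩ h
  simp only [F, Subtype.mk.injEq] at h
  have hk2 : 2 ≤ (k:ℕ) := by have := (Finset.mem_Icc.mp k.2).1; omega
  have hk2' : 2 ≤ (k':ℕ) := by have := (Finset.mem_Icc.mp k'.2).1; omega
  have hiter : ∀ j : ℕ,
      (theList w)[j % (k:ℕ)]'(by rw [theList_length (by omega) w]; exact Nat.mod_lt _ (by omega)) =
      (theList w')[j % (k':ℕ)]'(by rw [theList_length (by omega) w']; exact Nat.mod_lt _ (by omega)) := by
    intro j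
    rw [← buildPerm_pow_apply_zero hk2 w τ j, ← buildPerm_pow_apply_zero hk2' w' τ' j, h]
  have hdvd1 : (k':ℕ) ∣ (k:ℕ) := by
    have h1 := hiter (k:ℕ)
    have h2 : (theList w)[(k:ℕ) % (k:ℕ)]'(by
        rw [theList_length (by omega) w]; exact Nat.mod_lt _ (by omega)) = 0 :=
      (theList_getElem_eq_zero_iff w _).mpr (Nat.mod_self _)
    rw [h2] at h1
    exact Nat.dvd_of_mod_eq_zero ((theList_getElem_eq_zero_iff w' _).mp h1.symm)
  have hdvd2 : (k:ℕ) ∣ (k':ℕ) := by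
    have h1 := hiter (k':ℕ)
    have h2 : (theList w')[(k':ℕ) % (k':ℕ)]'(by
        rw [theList_length (by omega) w']; exact Nat.mod_lt _ (by omega)) = 0 :=
      (theList_getElem_eq_zero_iff w' _).mpr (Nat.mod_self _)
    rw [h2] at h1
    exact Nat.dvd_of_mod_eq_zero ((theList_getElem_eq_zero_iff w _).mp h1)
  obtain rfl : k = k' := Subtype.ext (Nat.dvd_antisymm hdvd2 hdvd1)
  obtain rfl : w = w' := by
    refine DFunLike.ext _ _ fun i => Subtype.ext ?_
    have hlt : (i : ℕ) + 1 < (k:ℕ) := by omega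
    have h1 := hiter ((i : ℕ) + 1)
    rw [getElem_idx_congr _ (Nat.mod_eq_of_lt hlt),
      getElem_idx_congr (theList w') (Nat.mod_eq_of_lt hlt)] at h1
    rw [theList_getElem_succ w _ (by rw [theList_length (by omega) w]; omega),
      theList_getElem_succ w' _ (by rw [theList_length (by omega) w']; omega)] at h1
    simpa only [Fin.eta] using h1
  obtain rfl : τ = τ' := by
    have h2 : τ.extendDomain (theEquiv (by omega : 1 ≤ (k:ℕ)) w) =
        τ'.extendDomain (theEquiv (by omega : 1 ≤ (k:ℕ)) w) := mul_left_cancel h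
    exact extendDomainHom_injective (theEquiv (by omega : 1 ≤ (k:ℕ)) w) h2
  rfl


noncomputable def numGood (d n : ℕ) : ℕ := Nat.card {σ : Perm (Fin n) // IsGood d σ}

theorem card_ne_zero (r : ℕ) [NeZero r] : Fintype.card {x : Fin r // x ≠ 0} = r - 1 := by
  simp [Fintype.card_subtype_compl]

theorem recursion_nat (d r : ℕ) [NeZero r] (hd : 1 ≤ d) :
    ∑ k ∈ Finset.Icc (d+1) r, (r-1).descFactorial (k-1) * numGood d (r-k) ≤ numGood d r := by
  have h := Nat.card_le_card_of_injective _ (F_injective (r := r) d hd)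
  refine le_trans (le_of_eq ?_) h
  rw [Nat.card_eq_fintype_card, Fintype.card_sigma]
  rw [← Finset.sum_coe_sort (Finset.Icc (d+1) r)
    (fun k => (r-1).descFactorial (k-1) * numGood d (r-k))]
  congr 1
  ext k
  rw [Fintype.card_prod, Fintype.card_embedding_eq, Fintype.card_fin, card_ne_zero,
    numGood, Nat.card_eq_fintype_card]


theorem numGood_zero (d : ℕ) : numGood d 0 = 1 := by
  haveI : Unique {σ : Perm (Fin 0) // IsGood d σ} :=
    { default := ⟨1, by constructor <;> simp⟩
      uniq := fun a => Subtype.ext (Subsingleton.elim _ _) }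
  rw [numGood, Nat.card_unique]

theorem main (d : ℕ) (hd : 1 ≤ d) :
    ∀ r : ℕ, d < r → 1/(10*(d:ℝ)) ≤ (numGood d r : ℝ) / (Nat.factorial r) := by
  intro r
  induction r using Nat.strong_induction_on with
  | _ r IH =>
  intro hr
  haveI : NeZero r := ⟨by omega⟩
  have hd0 : (0:ℝ) < 10 * d := by
    have : (1:ℝ) ≤ d := by exact_mod_cast hd
    nlinarith
  have hr0 : (0:ℝ) < r := by
    have : 0 < r := by omega
    exact_mod_cast this
  set q : ℕ → ℝ := fun j => (numGood d j : ℝ) / (Nat.factorial j) with hq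
  have hqnn : ∀ j, 0 ≤ q j := fun j => by
    rw [hq]; positivity
  have hterm : ∀ k ∈ Finset.Icc (d+1) r,
      (((r-1).descFactorial (k-1) * numGood d (r-k) : ℕ) : ℝ) / (Nat.factorial r)
        = (1/r) * q (r-k) := by
    intro k hk
    obtain ⟨hk1, hk2⟩ := Finset.mem_Icc.mp hk
    have hid : ((r-k).factorial * (r-1).descFactorial (k-1)) = (r-1).factorial := by
      have h := Nat.factorial_mul_descFactorial (show k-1 ≤ r-1 by omega)
      rw [show r-1-(k-1) = r-k by omega] at h
      exact h
    have hrfac : r.factorial = r * ((r-k).factorial * (r-1).descFactorial (k-1)) := by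
      rw [hid, Nat.mul_factorial_pred (by omega)]
    have hrfacR : (r.factorial : ℝ) = r * ((r-k).factorial * (r-1).descFactorial (k-1)) := by
      exact_mod_cast congrArg (Nat.cast (R := ℝ)) hrfac
    have hfk : ((r-k).factorial : ℝ) ≠ 0 := by positivity
    have hD : (((r-1).descFactorial (k-1)) : ℝ) ≠ 0 := by
      have hne : (r-1).descFactorial (k-1) ≠ 0 := by
        rw [Ne, Nat.descFactorial_eq_zero_iff_lt]; omega
      exact Nat.cast_ne_zero.mpr hne
    rw [hq]
    push_cast
    rw [hrfacR]
    field_simp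
  have hS := recursion_nat d r hd
  have hsum : ∑ k ∈ Finset.Icc (d+1) r, (1/(r:ℝ)) * q (r-k)
      ≤ (numGood d r : ℝ) / r.factorial := by
    rw [← Finset.sum_congr rfl hterm, ← Finset.sum_div]
    gcongr
    exact_mod_cast hS
  have hsub : insert r (Finset.Icc (d+1) (r-d-1)) ⊆ Finset.Icc (d+1) r := by
    intro x hx
    rcases Finset.mem_insert.mp hx with rfl | hx
    · exact Finset.mem_Icc.mpr ⟨by omega, le_rfl⟩
    · obtain ⟨a, b⟩ := Finset.mem_Icc.mp hx
      exact Finset.mem_Icc.mpr ⟨a, by omega⟩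
  have hnot : r ∉ Finset.Icc (d+1) (r-d-1) := by
    rw [Finset.mem_Icc]; omega
  have h1 : ∑ k ∈ insert r (Finset.Icc (d+1) (r-d-1)), (1/(r:ℝ)) * q (r-k)
      ≤ ∑ k ∈ Finset.Icc (d+1) r, (1/(r:ℝ)) * q (r-k) :=
    Finset.sum_le_sum_of_subset_of_nonneg hsub (fun k _ _ => by
      have := hqnn (r-k)
      positivity)
  rw [Finset.sum_insert hnot] at h1
  have hq0 : q (r - r) = 1 := by
    simp [hq, Nat.sub_self, numGood_zero]
  have hlow : ∀ k ∈ Finset.Icc (d+1) (r-d-1), (1/(r:ℝ))*(1/(10*d)) ≤ (1/(r:ℝ)) * q (r-k) := by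
    intro k hk
    obtain ⟨a, b⟩ := Finset.mem_Icc.mp hk
    have hih := IH (r-k) (by omega) (by omega)
    have h1r : (0:ℝ) ≤ 1/(r:ℝ) := by positivity
    exact mul_le_mul_of_nonneg_left hih h1r
  have h2 := Finset.card_nsmul_le_sum _ _ _ hlow
  rw [nsmul_eq_mul] at h2
  set m := (Finset.Icc (d+1) (r-d-1)).card with hmdef
  have hmr : r ≤ 10*d + m := by
    have : m = (r-d-1) + 1 - (d+1) := by rw [hmdef, Nat.card_Icc]
    omega
  have hmrR : (r:ℝ) ≤ 10*d + m := by exact_mod_cast hmr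
  have final : (1:ℝ)/(10*d) ≤ 1/r * q (r-r) + m * ((1/r)*(1/(10*d))) := by
    rw [hq0, mul_one]
    have e1 : (1:ℝ)/r + m*((1/r)*(1/(10*d))) = (10*d + m)/(r*(10*d)) := by
      field_simp
    have e2 : (1:ℝ)/(10*d) = r/(r*(10*d)) := by
      rw [eq_comm, div_eq_div_iff (by positivity) (ne_of_gt hd0)]
      ring
    rw [e1, e2]
    gcongr
  calc 1/(10*(d:ℝ)) ≤ 1/r * q (r-r) + m * ((1/r)*(1/(10*d))) := final
    _ ≤ 1/r * q (r-r) + ∑ k ∈ Finset.Icc (d+1) (r-d-1), (1/(r:ℝ)) * q (r-k) := by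
        linarith [h2]
    _ ≤ ∑ k ∈ Finset.Icc (d+1) r, (1/(r:ℝ)) * q (r-k) := h1
    _ ≤ (numGood d r : ℝ) / r.factorial := hsum

end ProbLong
theorem prob_all_cycles_long_ge (d r : ℕ) (hd : 1 ≤ d) (hr : d < r) :
    1 / (10 * d : ℝ) ≤ probAllCyclesLong d r := by
  exact ProbLong.main d hd r hr
end

section
/- Let $n$ and $\ell$ be positive integers with $\ell < n$, and let $E$ be the event that a uniformly random permutation $\sigma \in S_n$ has exactly $\ell$ fixed points and all other cycles of length greater than $d$, where $d \ge 1$ and $n - \ell > d$. Then $\Pr[E] \ge \frac{1}{10 d \cdot \ell!}$. -/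
open Equiv Equiv.Perm Finset
open scoped Classical

noncomputable def aCount (d r : ℕ) : ℕ :=
  Nat.card {σ : Equiv.Perm (Fin r) // σ.cycleType.sum = r ∧ ∀ k ∈ σ.cycleType, d < k}

lemma aCount_zero (d : ℕ) : aCount d 0 = 1 := by
  rw [aCount, Nat.card_eq_fintype_card, Fintype.card_eq_one_iff]
  exact ⟨⟨1, by simp⟩, fun y => Subtype.ext (Subsingleton.elim _ _)⟩

lemma construction (d r k : ℕ) (hd : 1 ≤ d) (hk : d < k) (hkr : k ≤ r) (x0 : Fin r) :
    (r-1).descFactorial (k-1) * aCount d (r-k) ≤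
    (univ.filter (fun σ : Equiv.Perm (Fin r) =>
       (σ.cycleType.sum = r ∧ ∀ m ∈ σ.cycleType, d < m) ∧ (σ^k) x0 = x0 ∧
         ∀ i, 0 < i → i < k → (σ^i) x0 ≠ x0)).card := by
  classical
  have h2k : 2 ≤ k := by omega
  set D := (Fin (k-1) ↪ {x : Fin r // x ≠ x0}) ×
      {e : Equiv.Perm (Fin (r-k)) // e.cycleType.sum = r-k ∧ ∀ m ∈ e.cycleType, d < m} with hD
  have cardD : Fintype.card D = (r-1).descFactorial (k-1) * aCount d (r-k) := by
    unfold D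
    rw [Fintype.card_prod, Fintype.card_embedding_eq, Fintype.card_fin,
      aCount, Nat.card_eq_fintype_card]
    congr 2
    simp [Fintype.card_subtype_compl]
  -- the list forming the cycle of x0
  set lf : D → List (Fin r) := fun p => x0 :: List.ofFn (fun i => (p.1 i).1) with hlf
  have hlen : ∀ p : D, (lf p).length = k := by
    intro p; simp only [hlf, List.length_cons, List.length_ofFn]; omega
  have hnodup : ∀ p : D, (lf p).Nodup := by
    intro p
    refine List.nodup_cons.2 ⟨?_, ?_⟩
    · simp only [List.mem_ofFn]
      rintro ⟨i, hi⟩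
      exact (p.1 i).2 hi
    · exact (List.nodup_ofFn).2 (fun i j hij => p.1.injective (Subtype.ext hij))
  have hx0mem : ∀ p : D, x0 ∈ lf p := fun p => List.mem_cons_self
  set T : D → Finset (Fin r) := fun p => (lf p).toFinsetᶜ with hT
  have hTcard : ∀ p : D, (T p).card = r - k := by
    intro p
    rw [hT, Finset.card_compl, List.toFinset_card_of_nodup (hnodup p), hlen p, Fintype.card_fin]
  set eqv : ∀ p : D, Fin (r-k) ≃ {x : Fin r // x ∈ T p} :=
    fun p => ((T p).orderIsoOfFin (hTcard p)).toEquiv with heqv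
  set φ : D → Equiv.Perm (Fin r) :=
    fun p => (lf p).formPerm * ((p.2.1).extendDomain (eqv p)) with hφ
  -- basic facts
  have hfix : ∀ p : D, ∀ x ∈ lf p, (p.2.1).extendDomain (eqv p) x = x := by
    intro p x hx
    refine Equiv.Perm.extendDomain_apply_not_subtype _ _ ?_
    simp [hT, List.mem_toFinset, hx]
  have hdisj : ∀ p : D, Equiv.Perm.Disjoint (lf p).formPerm ((p.2.1).extendDomain (eqv p)) := by
    intro p x
    by_cases hx : x ∈ lf p
    · exact Or.inr (hfix p x hx)
    · exact Or.inl (List.formPerm_apply_of_notMem hx)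
  have hcycle : ∀ p : D, Equiv.Perm.IsCycle (lf p).formPerm := by
    intro p
    exact List.isCycle_formPerm (hnodup p) (by rw [hlen p]; omega)
  have hsupp : ∀ p : D, (lf p).formPerm.support = (lf p).toFinset := by
    intro p
    refine List.support_formPerm_of_nodup _ (hnodup p) ?_
    intro x hx
    apply_fun List.length at hx
    rw [hlen p] at hx
    simp at hx
    omega
  have hct : ∀ p : D, (φ p).cycleType = {k} + (p.2.1).cycleType := by
    intro p
    rw [hφ]
    rw [(hdisj p).cycleType_mul, Equiv.Perm.cycleType_extendDomain]
    congr 1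
    rw [(hcycle p).cycleType, hsupp p, List.toFinset_card_of_nodup (hnodup p), hlen p]
  -- iterates of φ p at x0 follow the list
  have hpow : ∀ p : D, ∀ i : ℕ, ((φ p)^i) x0 =
      (lf p).get ⟨i % k, by rw [hlen p]; exact Nat.mod_lt _ (by omega)⟩ := by
    intro p i
    have hcomm := (hdisj p).commute
    have ht : ∀ j : ℕ, (((p.2.1).extendDomain (eqv p))^j) x0 = x0 := by
      intro j
      induction j with
      | zero => rfl
      | succ j ih => rw [pow_succ, Equiv.Perm.mul_apply, hfix p x0 (hx0mem p), ih]
    have key : ((φ p)^i) x0 = ((lf p).formPerm ^ i) x0 := by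
      rw [hφ]
      simp only [hcomm.mul_pow, Equiv.Perm.mul_apply, ht i]
    rw [key]
    have hform := List.formPerm_pow_apply_head x0 (List.ofFn (fun i => (p.1 i).1)) (hnodup p) i
    simp only [List.get_eq_getElem]
    convert hform using 3
    all_goals exact (hlen p).symm
  -- membership in the filter
  have hmem : ∀ p : D, φ p ∈ (univ.filter (fun σ : Equiv.Perm (Fin r) =>
       (σ.cycleType.sum = r ∧ ∀ m ∈ σ.cycleType, d < m) ∧ (σ^k) x0 = x0 ∧
         ∀ i, 0 < i → i < k → (σ^i) x0 ≠ x0)) := by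
    intro p
    rw [Finset.mem_filter]
    have hx0get : (lf p).get ⟨0, by rw [hlen p]; omega⟩ = x0 := rfl
    refine ⟨Finset.mem_univ _, ⟨⟨?_, ?_⟩, ?_, ?_⟩⟩
    · rw [hct p]
      rw [Multiset.sum_add, Multiset.sum_singleton, p.2.2.1]
      omega
    · intro m hm
      rcases Multiset.mem_add.1 (by rw [hct p] at hm; exact hm) with h1 | h2
      · rw [Multiset.mem_singleton] at h1; omega
      · exact p.2.2.2 m h2
    · rw [hpow p k]
      simp only [Nat.mod_self]
      exact hx0get
    · intro i h0 hik
      rw [hpow p i]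
      intro hcon
      have hcon2 := hcon.trans hx0get.symm
      simp only [List.get_eq_getElem] at hcon2
      have := ((hnodup p).getElem_inj_iff).1 hcon2
      rw [Nat.mod_eq_of_lt hik] at this
      omega
  -- injectivity
  have hinj : Function.Injective φ := by
    intro p q h
    have hplist : lf p = lf q := by
      apply List.ext_getElem (by rw [hlen p, hlen q])
      intro i hip hiq
      have hi : i < k := by rw [hlen p] at hip; exact hip
      have h1 := hpow p i
      have h2 := hpow q i
      rw [h] at h1
      have h3 := h1.symm.trans h2
      simp only [List.get_eq_getElem, Nat.mod_eq_of_lt hi] at h3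
      exact h3
    obtain ⟨f, e⟩ := p
    obtain ⟨g, e'⟩ := q
    have hfg : f = g := by
      have htail : List.ofFn (fun i => (f i).1) = List.ofFn (fun i => (g i).1) := by
        simpa [hlf] using hplist
      rw [List.ofFn_inj] at htail
      ext i
      exact congrArg Fin.val (congrFun htail i)
    subst hfg
    have hcancel : Equiv.Perm.extendDomain e.1 (eqv (f, e)) =
        Equiv.Perm.extendDomain e'.1 (eqv (f, e')) := by
      have h' : (lf (f, e)).formPerm * Equiv.Perm.extendDomain e.1 (eqv (f, e)) =
          (lf (f, e)).formPerm * Equiv.Perm.extendDomain e'.1 (eqv (f, e')) := h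
      exact mul_left_cancel h' 
    have hee : e.1 = e'.1 := by
      apply Equiv.ext
      intro a
      have h1 : Equiv.Perm.extendDomain e.1 (eqv (f, e)) (eqv (f, e) a) =
          (eqv (f, e)) (e.1 a) := Equiv.Perm.extendDomain_apply_image _ _ _
      have h2 : Equiv.Perm.extendDomain e'.1 (eqv (f, e')) (eqv (f, e') a) =
          (eqv (f, e')) (e'.1 a) := Equiv.Perm.extendDomain_apply_image _ _ _
      have heqv : eqv (f, e) = eqv (f, e') := rfl
      rw [hcancel, ← heqv] at h1
      rw [← heqv] at h2
      have := h1.symm.trans h2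
      exact (eqv (f, e)).injective (Subtype.coe_injective this)
    exact Prod.ext rfl (Subtype.ext hee)
  calc (r-1).descFactorial (k-1) * aCount d (r-k) = Fintype.card D := cardD.symm
    _ = (univ : Finset D).card := (Finset.card_univ).symm
    _ ≤ _ := Finset.card_le_card_of_injOn φ (fun p _ => hmem p) hinj.injOn

lemma rec_ineq (d r : ℕ) (hd : 1 ≤ d) (hr : d < r) :
    ∑ k ∈ Finset.Ioc d r, (r-1).descFactorial (k-1) * aCount d (r-k) ≤ aCount d r := by
  classical
  have hr0 : 0 < r := by omega
  set x0 : Fin r := ⟨0, hr0⟩ with hx0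
  set t : ℕ → Finset (Equiv.Perm (Fin r)) := fun k => univ.filter (fun σ =>
     (σ.cycleType.sum = r ∧ ∀ m ∈ σ.cycleType, d < m) ∧ (σ^k) x0 = x0 ∧
       ∀ i, 0 < i → i < k → (σ^i) x0 ≠ x0) with ht
  have h1 : ∀ k ∈ Finset.Ioc d r, (r-1).descFactorial (k-1) * aCount d (r-k) ≤ (t k).card := by
    intro k hk
    rw [Finset.mem_Ioc] at hk
    exact construction d r k hd hk.1 hk.2 x0
  have hdisj : ∀ k ∈ Finset.Ioc d r, ∀ k' ∈ Finset.Ioc d r, k ≠ k' → Disjoint (t k) (t k') := by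
    intro k hk k' hk' hne
    rw [Finset.mem_Ioc] at hk hk'
    rw [Finset.disjoint_left]
    intro σ hσ hσ'
    rw [ht, Finset.mem_filter] at hσ hσ'
    rcases hne.lt_or_gt with h | h
    · exact hσ'.2.2.2 k (by omega) h hσ.2.2.1
    · exact hσ.2.2.2 k' (by omega) h hσ'.2.2.1
  calc ∑ k ∈ Finset.Ioc d r, (r-1).descFactorial (k-1) * aCount d (r-k)
      ≤ ∑ k ∈ Finset.Ioc d r, (t k).card := Finset.sum_le_sum h1
    _ = ((Finset.Ioc d r).biUnion t).card := (Finset.card_biUnion hdisj).symm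
    _ ≤ (univ.filter (fun σ : Equiv.Perm (Fin r) =>
          σ.cycleType.sum = r ∧ ∀ m ∈ σ.cycleType, d < m)).card := by
        apply Finset.card_le_card
        rw [Finset.biUnion_subset]
        intro k _ σ hσ
        rw [ht, Finset.mem_filter] at hσ
        rw [Finset.mem_filter]
        exact ⟨Finset.mem_univ _, hσ.2.1⟩
    _ = aCount d r := by
        rw [aCount, Nat.card_eq_fintype_card, Fintype.card_subtype]

lemma key_ineq (d : ℕ) (hd : 1 ≤ d) : ∀ r, d < r → Nat.factorial r ≤ 10 * d * aCount d r := by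
  intro r
  induction r using Nat.strong_induction_on with
  | _ r IH =>
  intro hr
  have hrec := rec_ineq d r hd hr
  have hsubset : insert r (Finset.Ioc d (r - d - 1)) ⊆ Finset.Ioc d r := by
    intro k hk
    rcases Finset.mem_insert.1 hk with h | h
    · subst h; rw [Finset.mem_Ioc]; omega
    · rw [Finset.mem_Ioc] at h ⊢; omega
  have hnotmem : r ∉ Finset.Ioc d (r - d - 1) := by
    rw [Finset.mem_Ioc]; omega
  have hsum : (r-1).descFactorial (r-1) * aCount d (r-r) +
      ∑ k ∈ Finset.Ioc d (r-d-1), (r-1).descFactorial (k-1) * aCount d (r-k)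
      ≤ ∑ k ∈ Finset.Ioc d r, (r-1).descFactorial (k-1) * aCount d (r-k) := by
    have h := Finset.sum_le_sum_of_subset (f := fun k => (r-1).descFactorial (k-1) * aCount d (r-k)) hsubset
    rwa [Finset.sum_insert hnotmem] at h
  rw [Nat.sub_self, aCount_zero, Nat.descFactorial_self, mul_one] at hsum
  have hterm2 : ∀ k ∈ Finset.Ioc d (r-d-1),
      Nat.factorial (r-1) ≤ 10 * d * ((r-1).descFactorial (k-1) * aCount d (r-k)) := by
    intro k hk
    rw [Finset.mem_Ioc] at hk
    have h1 : d < r - k := by omega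
    have h2 : r - k < r := by omega
    have h3 := IH (r-k) h2 h1
    calc Nat.factorial (r-1)
        = Nat.factorial (r-1-(k-1)) * (r-1).descFactorial (k-1) :=
          (Nat.factorial_mul_descFactorial (by omega)).symm
      _ = Nat.factorial (r-k) * (r-1).descFactorial (k-1) := by
          congr 2; omega
      _ ≤ (10 * d * aCount d (r-k)) * (r-1).descFactorial (k-1) :=
          Nat.mul_le_mul_right _ h3
      _ = 10 * d * ((r-1).descFactorial (k-1) * aCount d (r-k)) := by ring
  have hcard : (Finset.Ioc d (r-d-1)).card = r - d - 1 - d := Nat.card_Ioc _ _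
  have hsum2 : (r - d - 1 - d) * Nat.factorial (r-1) ≤
      ∑ k ∈ Finset.Ioc d (r-d-1), 10 * d * ((r-1).descFactorial (k-1) * aCount d (r-k)) := by
    rw [← hcard, ← smul_eq_mul]
    exact Finset.card_nsmul_le_sum _ _ _ hterm2
  calc Nat.factorial r = r * Nat.factorial (r-1) := by
        conv_lhs => rw [show r = (r-1)+1 by omega]
        rw [Nat.factorial_succ]
        congr 1
        omega
    _ ≤ (10*d + (r - d - 1 - d)) * Nat.factorial (r-1) :=
        Nat.mul_le_mul_right _ (by omega)
    _ = 10*d*(Nat.factorial (r-1)) + (r-d-1-d) * Nat.factorial (r-1) := by ring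
    _ ≤ 10*d*(Nat.factorial (r-1)) +
        ∑ k ∈ Finset.Ioc d (r-d-1), 10 * d * ((r-1).descFactorial (k-1) * aCount d (r-k)) :=
        Nat.add_le_add_left hsum2 _
    _ = 10*d*(Nat.factorial (r-1) +
        ∑ k ∈ Finset.Ioc d (r-d-1), (r-1).descFactorial (k-1) * aCount d (r-k)) := by
        rw [Nat.mul_add, Finset.mul_sum]
    _ ≤ 10*d*(∑ k ∈ Finset.Ioc d r, (r-1).descFactorial (k-1) * aCount d (r-k)) :=
        Nat.mul_le_mul_left _ hsum
    _ ≤ 10*d* aCount d r := Nat.mul_le_mul_left _ hrec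

lemma top_ineq (d n m : ℕ) (hm : m ≤ n) :
    n.choose m * aCount d m ≤
      Nat.card {σ : Equiv.Perm (Fin n) // σ.cycleType.sum = m ∧ ∀ k ∈ σ.cycleType, d < k} := by
  classical
  set D := {s : Finset (Fin n) // s.card = m} ×
      {e : Equiv.Perm (Fin m) // e.cycleType.sum = m ∧ ∀ k ∈ e.cycleType, d < k} with hD
  have cardD : Fintype.card D = n.choose m * aCount d m := by
    unfold D
    rw [Fintype.card_prod, Fintype.card_finset_len, Fintype.card_fin, aCount,
      Nat.card_eq_fintype_card]
  set eqv : ∀ p : D, Fin m ≃ {x : Fin n // x ∈ p.1.1} :=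
    fun p => ((p.1.1).orderIsoOfFin p.1.2).toEquiv with heqv
  set φ : D → Equiv.Perm (Fin n) := fun p => (p.2.1).extendDomain (eqv p) with hφ
  have hgood : ∀ p : D, (φ p).cycleType.sum = m ∧ ∀ k ∈ (φ p).cycleType, d < k := by
    intro p
    rw [hφ]
    simp only [Equiv.Perm.cycleType_extendDomain]
    exact p.2.2
  have hsupport : ∀ p : D, ∀ x : Fin n, φ p x ≠ x ↔ x ∈ p.1.1 := by
    intro p x
    constructor
    · intro hx
      by_contra hmem
      exact hx (Equiv.Perm.extendDomain_apply_not_subtype _ _ hmem)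
    · intro hmem
      have huniv : (p.2.1).support = Finset.univ := by
        apply Finset.eq_univ_of_card
        rw [← Equiv.Perm.sum_cycleType, p.2.2.1, Fintype.card_fin]
      have hne : ∀ a : Fin m, p.2.1 a ≠ a := by
        intro a
        exact Equiv.Perm.mem_support.1 (by rw [huniv]; exact Finset.mem_univ a)
      set a := (eqv p).symm ⟨x, hmem⟩ with ha
      have hxa : x = ((eqv p) a : Fin n) := by
        rw [ha, Equiv.apply_symm_apply]
      rw [hxa, Equiv.Perm.extendDomain_apply_image]
      intro hcon
      exact hne a ((eqv p).injective (Subtype.coe_injective hcon))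
  have hinj : Function.Injective φ := by
    intro p q h
    have hset : p.1 = q.1 := Subtype.ext (by
      ext x
      rw [← hsupport p x, ← hsupport q x, h])
    obtain ⟨S, e⟩ := p
    obtain ⟨S', e'⟩ := q
    simp only at hset
    subst hset
    have hee : e.1 = e'.1 := by
      apply Equiv.ext
      intro a
      have h1 := Equiv.Perm.extendDomain_apply_image e.1 (eqv (S, e)) a
      have h2 := Equiv.Perm.extendDomain_apply_image e'.1 (eqv (S, e')) a
      have heq2 : eqv (S, e) = eqv (S, e') := rfl
      have hh : Equiv.Perm.extendDomain e.1 (eqv (S, e)) =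
          Equiv.Perm.extendDomain e'.1 (eqv (S, e')) := h
      rw [hh, ← heq2] at h1
      rw [← heq2] at h2
      exact (eqv (S, e)).injective (Subtype.coe_injective (h1.symm.trans h2))
    exact Prod.ext rfl (Subtype.ext hee)
  rw [Nat.card_eq_fintype_card]
  calc n.choose m * aCount d m = Fintype.card D := cardD.symm
    _ ≤ _ := Fintype.card_le_of_injective (fun p => ⟨φ p, hgood p⟩)
        (fun p q hpq => hinj (congrArg Subtype.val hpq))

theorem prob_fixed_points_and_long_cycles_ge (n ℓ d : ℕ)
    (hℓ : 1 ≤ ℓ) (hℓn : ℓ < n) (hd : 1 ≤ d) (hnℓ : d < n - ℓ) :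
    1 / (10 * d * Nat.factorial ℓ : ℝ) ≤
      (Nat.card {σ : Equiv.Perm (Fin n) //
          σ.cycleType.sum = n - ℓ ∧ ∀ k ∈ σ.cycleType, d < k} : ℝ)
        / (Nat.factorial n : ℝ) := by
  have hkey := key_ineq d hd (n - ℓ) hnℓ
  have htop := top_ineq d n (n - ℓ) (by omega)
  set N := Nat.card {σ : Equiv.Perm (Fin n) //
      σ.cycleType.sum = n - ℓ ∧ ∀ k ∈ σ.cycleType, d < k} with hN
  have hnat : Nat.factorial n ≤ N * (10 * d * Nat.factorial ℓ) := by
    calc Nat.factorial n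
        = n.choose (n-ℓ) * Nat.factorial (n-ℓ) * Nat.factorial (n-(n-ℓ)) :=
          (Nat.choose_mul_factorial_mul_factorial (by omega)).symm
      _ = n.choose (n-ℓ) * Nat.factorial (n-ℓ) * Nat.factorial ℓ := by
          rw [show n-(n-ℓ) = ℓ by omega]
      _ ≤ n.choose (n-ℓ) * (10 * d * aCount d (n-ℓ)) * Nat.factorial ℓ := by
          exact Nat.mul_le_mul_right _ (Nat.mul_le_mul_left _ hkey)
      _ = (n.choose (n-ℓ) * aCount d (n-ℓ)) * (10 * d * Nat.factorial ℓ) := by ring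
      _ ≤ N * (10 * d * Nat.factorial ℓ) := Nat.mul_le_mul_right _ htop
  have hfac : (0:ℝ) < (Nat.factorial n : ℝ) := by
    exact_mod_cast Nat.factorial_pos n
  have hden : (0:ℝ) < (10 * d * Nat.factorial ℓ : ℝ) := by
    have h1 : (0:ℝ) < (d:ℝ) := by exact_mod_cast hd
    have h2 : (0:ℝ) < (Nat.factorial ℓ : ℝ) := by exact_mod_cast Nat.factorial_pos ℓ
    positivity
  rw [div_le_div_iff₀ hden hfac, one_mul]
  calc (Nat.factorial n : ℝ) = ((Nat.factorial n : ℕ) : ℝ) := by norm_cast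
    _ ≤ ((N * (10 * d * Nat.factorial ℓ) : ℕ) : ℝ) := by exact_mod_cast hnat
    _ = (N : ℝ) * (10 * d * Nat.factorial ℓ : ℝ) := by push_cast; ring
end
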